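/- arXiv:2006.13388 — 3 statements merged into one kernel-verified Lean document; each statement's English description precedes it below -/
import Mathlib

section
/- Let n ≥ 1 and let X_1,...,X_n, Y_1,...,Y_n be indeterminates (or elements of a field such that all denominators are nonzero). Then det_{1≤i,j≤n} ( 1/(X_i + Y_j) ) = ∏_{1≤i<j≤n} (X_j - X_i)(Y_j - Y_i) / ∏_{i,j=1}^{n} (X_i + Y_j). -/
open Finset Matrix

theorem cauchy_aux {F : Type*} [Field F] :
    ∀ (n : ℕ) (X Y : Fin n → F), (∀ i j, X i + Y j ≠ 0) →
    Matrix.det (Matrix.of fun i j : Fin n => (X i + Y j)⁻¹) =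
      (∏ i : Fin n, ∏ j ∈ Finset.Ioi i, ((X j - X i) * (Y j - Y i))) /
        ∏ i : Fin n, ∏ j : Fin n, (X i + Y j) := by
  intro n
  induction n with
  | zero =>
    intro X Y h
    simp [Matrix.det_fin_zero]
  | succ n ih =>
    intro X Y h
    -- Step 1: subtract row 0 from other rows
    have step1 :
        Matrix.det (Matrix.of fun i j : Fin (n+1) => (X i + Y j)⁻¹) =
        Matrix.det (Matrix.of fun i j : Fin (n+1) =>
          if i = 0 then (X 0 + Y j)⁻¹
          else (X 0 - X i) * ((X 0 + Y j)⁻¹ * (X i + Y j)⁻¹)) := by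
      apply det_eq_of_forall_row_eq_smul_add_const
        (fun i => if i = 0 then 0 else 1) 0 (by simp)
      intro i j
      by_cases hi : i = 0
      · simp [hi]
      · have h1 := h i j
        have h2 := h 0 j
        simp only [Matrix.of_apply, hi, if_neg hi, if_pos rfl, one_mul, ↓reduceIte]
        field_simp
        ring
    -- Step 2: factor (X 0 + Y j)⁻¹ out of column j
    have step2 :
        Matrix.det (Matrix.of fun i j : Fin (n+1) =>
          if i = 0 then (X 0 + Y j)⁻¹
          else (X 0 - X i) * ((X 0 + Y j)⁻¹ * (X i + Y j)⁻¹)) =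
        (∏ j : Fin (n+1), (X 0 + Y j)⁻¹) *
        Matrix.det (Matrix.of fun i j : Fin (n+1) =>
          if i = 0 then 1 else (X 0 - X i) * (X i + Y j)⁻¹) := by
      have hmat : (Matrix.of fun i j : Fin (n+1) =>
          if i = 0 then (X 0 + Y j)⁻¹
          else (X 0 - X i) * ((X 0 + Y j)⁻¹ * (X i + Y j)⁻¹)) =
          Matrix.of fun i j : Fin (n+1) => (X 0 + Y j)⁻¹ *
            (Matrix.of fun i j : Fin (n+1) =>
              if i = 0 then 1 else (X 0 - X i) * (X i + Y j)⁻¹) i j := by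
        ext i j
        by_cases hi : i = 0 <;> simp [hi] <;> ring
      rw [hmat, Matrix.det_mul_row]
    -- Step 3: factor (X 0 - X i) out of row i ≠ 0
    have step3 :
        Matrix.det (Matrix.of fun i j : Fin (n+1) =>
          if i = 0 then 1 else (X 0 - X i) * (X i + Y j)⁻¹) =
        (∏ i : Fin n, (X 0 - X i.succ)) *
        Matrix.det (Matrix.of fun i j : Fin (n+1) =>
          if i = 0 then 1 else (X i + Y j)⁻¹) := by
      have hmat : (Matrix.of fun i j : Fin (n+1) =>
          if i = 0 then 1 else (X 0 - X i) * (X i + Y j)⁻¹) =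
          Matrix.of fun i j : Fin (n+1) => (if i = 0 then 1 else (X 0 - X i)) *
            (Matrix.of fun i j : Fin (n+1) =>
              if i = 0 then 1 else (X i + Y j)⁻¹) i j := by
        ext i j
        by_cases hi : i = 0 <;> simp [hi]
      rw [hmat, Matrix.det_mul_column]
      congr 1
      rw [Fin.prod_univ_succ]
      simp [Fin.succ_ne_zero]
    -- Step 4: subtract column 0 from other columns
    have step4 :
        Matrix.det (Matrix.of fun i j : Fin (n+1) =>
          if i = 0 then 1 else (X i + Y j)⁻¹) =
        Matrix.det (Matrix.of fun i j : Fin (n+1) =>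
          if j = 0 then (if i = 0 then 1 else (X i + Y 0)⁻¹)
          else if i = 0 then 0
          else (Y 0 - Y j) * ((X i + Y 0)⁻¹ * (X i + Y j)⁻¹)) := by
      rw [← Matrix.det_transpose, ← Matrix.det_transpose (Matrix.of fun i j : Fin (n+1) =>
          if j = 0 then (if i = 0 then 1 else (X i + Y 0)⁻¹)
          else if i = 0 then 0
          else (Y 0 - Y j) * ((X i + Y 0)⁻¹ * (X i + Y j)⁻¹))]
      apply det_eq_of_forall_row_eq_smul_add_const
        (fun j => if j = 0 then 0 else 1) 0 (by simp)
      intro j i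
      simp only [Matrix.transpose_apply, Matrix.of_apply]
      by_cases hj : j = 0
      · simp [hj]
      · by_cases hi : i = 0
        · simp [hi, hj]
        · have h1 := h i j
          have h2 := h i 0
          simp only [hj, hi, if_neg, if_pos rfl, one_mul, ite_false, ↓reduceIte]
          field_simp
          ring
    -- Step 5: expand along the first row (which is 1,0,...,0)
    have step5 :
        Matrix.det (Matrix.of fun i j : Fin (n+1) =>
          if j = 0 then (if i = 0 then 1 else (X i + Y 0)⁻¹)
          else if i = 0 then 0
          else (Y 0 - Y j) * ((X i + Y 0)⁻¹ * (X i + Y j)⁻¹)) =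
        Matrix.det (Matrix.of fun i j : Fin n =>
          (Y 0 - Y j.succ) * ((X i.succ + Y 0)⁻¹ * (X i.succ + Y j.succ)⁻¹)) := by
      rw [Matrix.det_succ_row_zero]
      rw [Finset.sum_eq_single 0]
      · rw [Fin.succAbove_zero]
        have hsub : ((Matrix.of fun i j : Fin (n+1) =>
            if j = 0 then (if i = 0 then 1 else (X i + Y 0)⁻¹)
            else if i = 0 then 0
            else (Y 0 - Y j) * ((X i + Y 0)⁻¹ * (X i + Y j)⁻¹)).submatrix Fin.succ Fin.succ) =
            Matrix.of fun i j : Fin n =>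
              (Y 0 - Y j.succ) * ((X i.succ + Y 0)⁻¹ * (X i.succ + Y j.succ)⁻¹) := by
          ext i j
          simp [Fin.succ_ne_zero]
        rw [hsub]
        norm_num
      · intro j _ hj
        simp [hj]
      · simp
    -- Step 6: factor out of submatrix
    have step6 :
        Matrix.det (Matrix.of fun i j : Fin n =>
          (Y 0 - Y j.succ) * ((X i.succ + Y 0)⁻¹ * (X i.succ + Y j.succ)⁻¹)) =
        (∏ j : Fin n, (Y 0 - Y j.succ)) * ((∏ i : Fin n, (X i.succ + Y 0)⁻¹) *
          Matrix.det (Matrix.of fun i j : Fin n => (X i.succ + Y j.succ)⁻¹)) := by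
      have hmat : (Matrix.of fun i j : Fin n =>
          (Y 0 - Y j.succ) * ((X i.succ + Y 0)⁻¹ * (X i.succ + Y j.succ)⁻¹)) =
          Matrix.of fun i j : Fin n => (Y 0 - Y j.succ) *
            (Matrix.of fun i j : Fin n => (X i.succ + Y 0)⁻¹ *
              (Matrix.of fun i j : Fin n => (X i.succ + Y j.succ)⁻¹) i j) i j := by
        ext i j
        simp
      rw [hmat, Matrix.det_mul_row, Matrix.det_mul_column]
    rw [step1, step2, step3, step4, step5, step6,
      ih (fun i => X i.succ) (fun j => Y j.succ) (fun i j => h i.succ j.succ)]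
    -- Final algebra
    have hP1 : (∏ j : Fin (n+1), (X 0 + Y j)) ≠ 0 :=
      Finset.prod_ne_zero_iff.mpr fun j _ => h 0 j
    have hP2 : (∏ i : Fin n, (X i.succ + Y 0)) ≠ 0 :=
      Finset.prod_ne_zero_iff.mpr fun i _ => h i.succ 0
    have hQ : (∏ i : Fin n, ∏ j : Fin n, (X i.succ + Y j.succ)) ≠ 0 :=
      Finset.prod_ne_zero_iff.mpr fun i _ => Finset.prod_ne_zero_iff.mpr fun j _ => h i.succ j.succ
    have e1 : (∏ j : Fin (n+1), (X 0 + Y j)⁻¹) = (∏ j : Fin (n+1), (X 0 + Y j))⁻¹ := by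
      rw [← Finset.prod_inv_distrib]
    have e2 : (∏ i : Fin n, (X i.succ + Y 0)⁻¹) = (∏ i : Fin n, (X i.succ + Y 0))⁻¹ := by
      rw [← Finset.prod_inv_distrib]
    rw [show (∏ i : Fin (n+1), ∏ j ∈ Finset.Ioi i, ((X j - X i) * (Y j - Y i))) =
        ((∏ i : Fin n, (X 0 - X i.succ)) * ∏ i : Fin n, (Y 0 - Y i.succ)) *
        ∏ i : Fin n, ∏ j ∈ Finset.Ioi i, ((X j.succ - X i.succ) * (Y j.succ - Y i.succ)) by
      rw [Fin.prod_univ_succ, Fin.prod_Ioi_zero]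
      congr 1
      · rw [← Finset.prod_mul_distrib]
        exact Finset.prod_congr rfl fun i _ => by ring
      · exact Finset.prod_congr rfl fun i _ => by rw [Fin.prod_Ioi_succ]]
    rw [show (∏ i : Fin (n+1), ∏ j : Fin (n+1), (X i + Y j)) =
        (∏ j : Fin (n+1), (X 0 + Y j)) *
        ((∏ i : Fin n, (X i.succ + Y 0)) * ∏ i : Fin n, ∏ j : Fin n, (X i.succ + Y j.succ)) by
      rw [Fin.prod_univ_succ]
      congr 1
      rw [← Finset.prod_mul_distrib]
      exact Finset.prod_congr rfl fun i _ => by rw [Fin.prod_univ_succ]]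
    rw [e1, e2]
    field_simp

/-- Cauchy determinant identity: for `n ≥ 1` and elements `X₁,…,Xₙ, Y₁,…,Yₙ` of
a field such that all denominators `Xᵢ + Yⱼ` are nonzero,
`det(1/(Xᵢ+Yⱼ)) = ∏_{i<j} (Xⱼ-Xᵢ)(Yⱼ-Yᵢ) / ∏_{i,j} (Xᵢ+Yⱼ)`. -/
theorem cauchy_determinant {F : Type*} [Field F] (n : ℕ) (hn : 1 ≤ n)
    (X Y : Fin n → F) (h : ∀ i j, X i + Y j ≠ 0) :
    Matrix.det (Matrix.of fun i j : Fin n => (X i + Y j)⁻¹) =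
      (∏ i : Fin n, ∏ j ∈ Finset.Ioi i, ((X j - X i) * (Y j - Y i))) /
        ∏ i : Fin n, ∏ j : Fin n, (X i + Y j) := by
  exact cauchy_aux n X Y h
end

section
/- The number of column strict shifted plane partitions of class l-1 (l ≥ 2) with at most n parts in the first row equals det_{0≤i,j≤n-1} ( C(i+j+l-1, i) + δ_{i,j} ), where C denotes the binomial coefficient and δ the Kronecker delta. -/
/-- A column strict shifted plane partition of class `c` with at most `n` parts in the first
row: rows are indexed `0, …, rows-1`, row `i` has `len i` parts `part i 0, …, part i (len i -1)`
(row `i` being indented `i` cells, so the cell `(i, j)` sits in absolute column `i + j`).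
The parts are positive, weakly decrease along rows and strictly decrease down columns, the row
lengths strictly decrease (a strict partition shape), and the first part of each row equals
`c` plus the length of that row.  The functions are normalised to `0` outside the diagram so
that equal plane partitions give equal structures. -/
structure CSSPP (c n : ℕ) where
  rows : ℕ
  len : ℕ → ℕ
  part : ℕ → ℕ → ℕ
  len_strict : ∀ i, i + 1 < rows → len (i + 1) < len i
  len_pos : ∀ i, i < rows → 0 < len i
  first_row_le : 0 < rows → len 0 ≤ n
  part_pos : ∀ i j, i < rows → j < len i → 0 < part i j
  row_weak_dec : ∀ i j, i < rows → j + 1 < len i → part i (j + 1) ≤ part i j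
  col_strict_dec : ∀ i j, i + 1 < rows → j < len (i + 1) → part (i + 1) j < part i (j + 1)
  class_eq : ∀ i, i < rows → part i 0 = c + len i
  len_eq_zero : ∀ i, rows ≤ i → len i = 0
  part_eq_zero : ∀ i j, ¬(i < rows ∧ j < len i) → part i j = 0


namespace Andrews
variable {c n : ℕ}

def cnt (p : ℕ → Bool) (t : ℕ) : ℕ := ((Finset.range t).filter (fun x => p x = true)).card

lemma cnt_zero (p : ℕ → Bool) : cnt p 0 = 0 := by simp [cnt]

lemma cnt_succ (p : ℕ → Bool) (t : ℕ) :
    cnt p (t + 1) = cnt p t + (if p t then 1 else 0) := by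
  unfold cnt
  rw [Finset.range_add_one, Finset.filter_insert]
  split
  · rw [Finset.card_insert_of_notMem (by simp)]
  · rw [Nat.add_zero]

lemma cnt_mono (p : ℕ → Bool) {s t : ℕ} (h : s ≤ t) : cnt p s ≤ cnt p t :=
  Finset.card_le_card (Finset.filter_subset_filter _ (Finset.range_subset_range.2 h))

lemma cnt_le_self (p : ℕ → Bool) (t : ℕ) : cnt p t ≤ t := by
  calc cnt p t ≤ (Finset.range t).card := Finset.card_filter_le _ _
  _ = t := Finset.card_range t

lemma cnt_succ_le (p : ℕ → Bool) (t : ℕ) : cnt p (t + 1) ≤ cnt p t + 1 := by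
  rw [cnt_succ]; split <;> omega

lemma cnt_le_cnt_add (p : ℕ → Bool) (s t : ℕ) (h : s ≤ t) : cnt p t ≤ cnt p s + (t - s) := by
  induction t with
  | zero => interval_cases s; simp [cnt_zero]
  | succ u ih =>
    rcases Nat.eq_or_lt_of_le h with h' | h'
    · subst h'; omega
    · have := ih (by omega)
      have := cnt_succ_le p u
      omega

lemma cnt_congr {p q : ℕ → Bool} (t : ℕ) (h : ∀ s < t, p s = q s) : cnt p t = cnt q t := by
  unfold cnt
  congr 1
  apply Finset.filter_congr
  intro x hx
  simp only [Finset.mem_range] at hx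
  rw [h x hx]

lemma cnt_stable {p : ℕ → Bool} {m : ℕ} (hs : ∀ s, m ≤ s → p s = false) {t : ℕ} (h : m ≤ t) :
    cnt p t = cnt p m := by
  induction t with
  | zero => rw [Nat.le_zero.mp h]
  | succ u ih =>
    rcases Nat.eq_or_lt_of_le h with h' | h'
    · rw [← h']
    · rw [cnt_succ, hs u (by omega), ih (by omega)]; simp

/-- `p` is a NE lattice path from `(-a, 0)` to `(0, c+b)` : it has `c+a+b` steps,
`a` of which are E-steps. -/
def IsPath (c a b : ℕ) (p : ℕ → Bool) : Prop :=
  (∀ t, c + a + b ≤ t → p t = false) ∧ cnt p (c + a + b) = a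

lemma IsPath.cnt_le {c a b : ℕ} {p : ℕ → Bool} (hp : IsPath c a b p) (t : ℕ) :
    cnt p t ≤ a := by
  rcases le_or_gt t (c + a + b) with h | h
  · exact hp.2 ▸ cnt_mono p h
  · rw [cnt_stable hp.1 (le_of_lt h), hp.2]

lemma cnt_eq_card_fin (p : ℕ → Bool) (m : ℕ) :
    cnt p m = (Finset.univ.filter (fun t : Fin m => p t = true)).card := by
  unfold cnt
  apply Finset.card_bij (fun (x : ℕ) hx => (⟨x, (Finset.mem_range.1 (Finset.mem_filter.1 hx).1)⟩ : Fin m))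
  · intro x hx; simp only [Finset.mem_filter] at hx ⊢
    exact ⟨Finset.mem_univ _, hx.2⟩
  · intro x hx y hy h; simpa using congrArg Fin.val h
  · intro y hy
    simp only [Finset.mem_filter] at hy
    exact ⟨y.val, Finset.mem_filter.2 ⟨Finset.mem_range.2 y.isLt, hy.2⟩, by simp⟩

def pathEquiv (c a b : ℕ) :
    {p : ℕ → Bool // IsPath c a b p} ≃ {s : Finset (Fin (c + a + b)) // s.card = a} where
  toFun p := ⟨Finset.univ.filter (fun t : Fin (c+a+b) => p.1 t = true),
    by rw [← cnt_eq_card_fin]; exact p.2.2⟩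
  invFun s := ⟨fun t => decide (∃ h : t < c + a + b, (⟨t, h⟩ : Fin (c+a+b)) ∈ s.1), by
    constructor
    · intro t ht; simp only [decide_eq_false_iff_not]
      rintro ⟨h, -⟩; omega
    · rw [cnt_eq_card_fin]
      have : (Finset.univ.filter (fun t : Fin (c+a+b) =>
          (decide (∃ h : (t : ℕ) < c + a + b, (⟨(t : ℕ), h⟩ : Fin (c+a+b)) ∈ s.1)) = true)) = s.1 := by
        ext t; simp
      rw [this, s.2]⟩
  left_inv p := by
    apply Subtype.ext
    funext t
    by_cases ht : t < c + a + b
    · simp [ht]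
    · rw [p.2.1 t (by omega)]
      simp only [decide_eq_false_iff_not]
      rintro ⟨h, -⟩; omega
  right_inv s := by
    apply Subtype.ext
    ext t
    simp

noncomputable instance pathFintype (c a b : ℕ) : Fintype {p : ℕ → Bool // IsPath c a b p} :=
  Fintype.ofEquiv _ (pathEquiv c a b).symm

lemma card_path (c a b : ℕ) :
    Fintype.card {p : ℕ → Bool // IsPath c a b p} = (c + a + b).choose a := by
  rw [Fintype.card_congr (pathEquiv c a b), Fintype.card_finset_len, Fintype.card_fin]

/-- the paths `p` (from `(-a,0)`) and `q` (from `(-a',0)`) are at the same point at times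
`tp`, `tq` respectively. -/
def MeetAt (a a' : ℕ) (p q : ℕ → Bool) (tp tq : ℕ) : Prop :=
  tp + a' = tq + a ∧ cnt p tp + a' = cnt q tq + a

def Meets (c a b a' b' : ℕ) (p q : ℕ → Bool) : Prop :=
  ∃ tp tq, tp ≤ c + a + b ∧ tq ≤ c + a' + b' ∧ MeetAt a a' p q tp tq

lemma meetAt_symm {a a' : ℕ} {p q : ℕ → Bool} {tp tq : ℕ} (h : MeetAt a a' p q tp tq) :
    MeetAt a' a q p tq tp := by
  obtain ⟨h1, h2⟩ := h
  exact ⟨by omega, by omega⟩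

lemma meets_symm {c a b a' b' : ℕ} {p q : ℕ → Bool} (h : Meets c a b a' b' p q) :
    Meets c a' b' a b q p := by
  obtain ⟨tp, tq, h1, h2, h3⟩ := h
  exact ⟨tq, tp, h2, h1, meetAt_symm h3⟩

def splice (p q : ℕ → Bool) (t₀ t₁ : ℕ) : ℕ → Bool :=
  fun t => if t < t₀ then p t else q (t - t₀ + t₁)

lemma cnt_splice_le {p q : ℕ → Bool} {t₀ t₁ t : ℕ} (h : t ≤ t₀) :
    cnt (splice p q t₀ t₁) t = cnt p t := by
  apply cnt_congr
  intro s hs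
  simp only [splice, if_pos (by omega : s < t₀)]

lemma cnt_splice_ge {p q : ℕ → Bool} {t₀ t₁ t : ℕ} (h : t₀ ≤ t) :
    cnt (splice p q t₀ t₁) t + cnt q t₁ = cnt p t₀ + cnt q (t - t₀ + t₁) := by
  induction t with
  | zero =>
    have : t₀ = 0 := by omega
    subst this
    rw [cnt_splice_le (le_refl 0)]
    simp
  | succ u ih =>
    rcases Nat.eq_or_lt_of_le h with h' | h'
    · rw [← h', cnt_splice_le (le_refl t₀)]
      simp
    · have hu : t₀ ≤ u := by omega
      have e1 : u + 1 - t₀ + t₁ = (u - t₀ + t₁) + 1 := by omega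
      rw [cnt_succ, e1, cnt_succ]
      have : splice p q t₀ t₁ u = q (u - t₀ + t₁) := by
        simp only [splice, if_neg (by omega : ¬ u < t₀)]
      rw [this]
      have := ih hu
      omega

/-- splicing at a meeting point produces a path with swapped sink -/
lemma isPath_splice {c a b a' b' : ℕ} {p q : ℕ → Bool} {tp tq : ℕ}
    (hp : IsPath c a b p) (hq : IsPath c a' b' q)
    (htq : tq ≤ c + a' + b') (hm : MeetAt a a' p q tp tq) :
    IsPath c a b' (splice p q tp tq) := by
  obtain ⟨hm1, hm2⟩ := hm
  have htp : tp ≤ c + a + b' := by omega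
  constructor
  · intro t ht
    have htt : tp ≤ t := by omega
    simp only [splice, if_neg (by omega : ¬ t < tp)]
    apply hq.1
    omega
  · have h1 := cnt_splice_ge (p := p) (q := q) (t₁ := tq) (t := c + a + b') htp
    have h2 : c + a + b' - tp + tq = c + a' + b' := by omega
    rw [h2, hq.2] at h1
    have h3 : cnt q tq ≤ a' := hq.cnt_le tq
    have h5 : cnt p tp ≤ a := hp.cnt_le tp
    omega

lemma splice_meetAt {a a' : ℕ} {p q : ℕ → Bool} {tp tq : ℕ} (hm : MeetAt a a' p q tp tq) :
    MeetAt a a' (splice p q tp tq) (splice q p tq tp) tp tq := by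
  refine ⟨hm.1, ?_⟩
  rw [cnt_splice_le (le_refl tp), cnt_splice_le (le_refl tq)]
  exact hm.2

lemma splice_splice {p q : ℕ → Bool} (tp tq : ℕ) :
    splice (splice p q tp tq) (splice q p tq tp) tp tq = p := by
  funext t
  simp only [splice]
  by_cases h : t < tp
  · rw [if_pos h, if_pos h]
  · rw [if_neg h, if_neg (by omega : ¬ t - tp + tq < tq)]
    congr 1
    omega

/-- translating a meeting with a spliced path, before the splice point -/
lemma meetAt_splice_left {e a : ℕ} {r p q : ℕ → Bool} {tp tq s t : ℕ} (hts : t ≤ tp) :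
    MeetAt e a r (splice p q tp tq) s t ↔ MeetAt e a r p s t := by
  unfold MeetAt
  rw [cnt_splice_le hts]

/-- translating a meeting with a spliced path, after the splice point -/
lemma meetAt_splice_right {e a a' : ℕ} {r p q : ℕ → Bool} {tp tq s t : ℕ}
    (hm : MeetAt a a' p q tp tq) (hts : tp ≤ t) :
    MeetAt e a r (splice p q tp tq) s t ↔ MeetAt e a' r q s (t - tp + tq) := by
  obtain ⟨hm1, hm2⟩ := hm
  have key1 : (t - tp + tq) + a = t + a' := by omega
  have key2 : cnt (splice p q tp tq) t + cnt q tq = cnt p tp + cnt q (t - tp + tq) :=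
    cnt_splice_ge hts
  unfold MeetAt
  omega

lemma ivt {f : ℕ → ℤ} (hup : ∀ t, f (t + 1) ≤ f t + 1) (hdown : ∀ t, f t ≤ f (t + 1) + 1)
    {T : ℕ} (h0 : 0 ≤ f 0) (hT : f T ≤ 0) : ∃ t ≤ T, f t = 0 := by
  induction T with
  | zero => exact ⟨0, le_refl 0, le_antisymm hT h0⟩
  | succ u ih =>
    by_cases h : f u ≤ 0
    · obtain ⟨t, ht, h⟩ := ih h
      exact ⟨t, by omega, h⟩
    · refine ⟨u + 1, le_refl _, ?_⟩
      have := hdown u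
      omega

/-- The crossing lemma: two paths whose sources and sinks are "out of order" must meet. -/
lemma crossing {c a b a' b' : ℕ} {p q : ℕ → Bool} (hp : IsPath c a b p) (hq : IsPath c a' b' q)
    (ha : a < a') (hb : b' < b) : Meets c a b a' b' p q := by
  set f : ℕ → ℤ := fun t => (cnt p t : ℤ) - a - (cnt q (t + (a' - a)) : ℤ) + a' with hf
  have hup : ∀ t, f (t + 1) ≤ f t + 1 := by
    intro t
    simp only [hf]
    have h1 := cnt_succ_le p t
    have h2 : cnt q (t + (a' - a)) ≤ cnt q (t + 1 + (a' - a)) := cnt_mono q (by omega)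
    push_cast
    omega
  have hdown : ∀ t, f t ≤ f (t + 1) + 1 := by
    intro t
    simp only [hf]
    have h1 : cnt p t ≤ cnt p (t + 1) := cnt_mono p (by omega)
    have h2 : t + 1 + (a' - a) = (t + (a' - a)) + 1 := by omega
    rw [h2]
    have h3 := cnt_succ_le q (t + (a' - a))
    push_cast
    omega
  have h0 : 0 ≤ f 0 := by
    simp only [hf]
    have h1 := cnt_le_self q (0 + (a' - a))
    have h2 := cnt_zero p
    push_cast
    omega
  have hT : f (c + a + b') ≤ 0 := by
    simp only [hf]
    have h1 : c + a + b' + (a' - a) = c + a' + b' := by omega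
    rw [h1, hq.2]
    have h2 := hp.cnt_le (c + a + b')
    push_cast
    omega
  obtain ⟨t, ht, hft⟩ := ivt hup hdown h0 hT
  refine ⟨t, t + (a' - a), by omega, by omega, by omega, ?_⟩
  simp only [hf] at hft
  omega

/-- `a 0, …, a s` is a possible row of length `s+1` in a CSSPP of class `c`. -/
def IsRow (c s : ℕ) (a : ℕ → ℕ) : Prop :=
  a 0 = c + s + 1 ∧ (∀ j, j < s → a (j + 1) ≤ a j) ∧ (∀ j, j ≤ s → 1 ≤ a j)

lemma IsRow.anti {c s : ℕ} {a : ℕ → ℕ} (h : IsRow c s a) {j j' : ℕ} (hj : j ≤ j') (hj' : j' ≤ s) :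
    a j' ≤ a j := by
  induction j' with
  | zero => interval_cases j; rfl
  | succ u ih =>
    rcases Nat.eq_or_lt_of_le hj with h' | h'
    · rw [h']
    · exact le_trans (h.2.1 u (by omega)) (ih (by omega) (by omega))

/-- The lattice path (from `(-s,0)` to `(0,c+s)`) encoding a row `a` of length `s+1`:
the `k`-th E-step is taken at height `a (s+1-k) - 1`, i.e. at time `a (s+1-k) + k - 2`. -/
noncomputable def rowPath (s : ℕ) (a : ℕ → ℕ) : ℕ → Bool :=
  fun t => @decide (∃ k ∈ Finset.Icc 1 s, t + 2 = a (s + 1 - k) + k) (Classical.propDecidable _)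

lemma rowPath_true_iff (s : ℕ) (a : ℕ → ℕ) (t : ℕ) :
    rowPath s a t = true ↔ ∃ k, 1 ≤ k ∧ k ≤ s ∧ t + 2 = a (s + 1 - k) + k := by
  rw [rowPath, @decide_eq_true_eq _ (Classical.propDecidable _)]
  simp only [Finset.mem_Icc]
  tauto

lemma rowPath_false_iff (s : ℕ) (a : ℕ → ℕ) (t : ℕ) :
    rowPath s a t = false ↔ ¬ ∃ k, 1 ≤ k ∧ k ≤ s ∧ t + 2 = a (s + 1 - k) + k := by
  rw [← rowPath_true_iff]
  simp

lemma tau_strictMono {c s : ℕ} {a : ℕ → ℕ} (h : IsRow c s a) {k k' : ℕ} (h1 : 1 ≤ k)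
    (h2 : k < k') (h3 : k' ≤ s) : a (s + 1 - k) + k < a (s + 1 - k') + k' := by
  have := h.anti (by omega : s + 1 - k' ≤ s + 1 - k) (by omega : s + 1 - k ≤ s)
  omega

lemma cnt_rowPath {c s : ℕ} {a : ℕ → ℕ} (h : IsRow c s a) (t : ℕ) :
    cnt (rowPath s a) t = ((Finset.Icc 1 s).filter (fun k => a (s + 1 - k) + k ≤ t + 1)).card := by
  unfold cnt
  symm
  apply Finset.card_bij (fun k _ => a (s + 1 - k) + k - 2)
  · intro k hk
    simp only [Finset.mem_filter, Finset.mem_Icc] at hk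
    have ha := h.2.2 (s + 1 - k) (by omega)
    simp only [Finset.mem_filter, Finset.mem_range]
    constructor
    · omega
    · rw [rowPath_true_iff]
      exact ⟨k, hk.1.1, hk.1.2, by omega⟩
  · intro k hk k' hk' he
    simp only [Finset.mem_filter, Finset.mem_Icc] at hk hk'
    by_contra hne
    rcases Nat.lt_or_ge k k' with hlt | hge
    · have := tau_strictMono h hk.1.1 hlt hk'.1.2
      have ha := h.2.2 (s + 1 - k) (by omega)
      omega
    · have hlt : k' < k := by omega
      have := tau_strictMono h hk'.1.1 hlt hk.1.2
      have ha := h.2.2 (s + 1 - k') (by omega)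
      omega
  · intro x hx
    simp only [Finset.mem_filter, Finset.mem_range, rowPath_true_iff] at hx
    obtain ⟨hxt, k, hk1, hk2, hk3⟩ := hx
    refine ⟨k, Finset.mem_filter.2 ⟨Finset.mem_Icc.2 ⟨hk1, hk2⟩, by omega⟩, by omega⟩

/-- Key characterization: the path of a row has made at least `m` E-steps by time `t`
iff `a (s+1-m) + m ≤ t + 1`. -/
lemma le_cnt_rowPath_iff {c s : ℕ} {a : ℕ → ℕ} (h : IsRow c s a) {m : ℕ} (hm1 : 1 ≤ m)
    (hms : m ≤ s) (t : ℕ) :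
    m ≤ cnt (rowPath s a) t ↔ a (s + 1 - m) + m ≤ t + 1 := by
  rw [cnt_rowPath h]
  constructor
  · intro hc
    by_contra hcon
    have hsub : ((Finset.Icc 1 s).filter (fun k => a (s + 1 - k) + k ≤ t + 1)) ⊆
        Finset.Icc 1 (m - 1) := by
      intro k hk
      simp only [Finset.mem_filter, Finset.mem_Icc] at hk ⊢
      refine ⟨hk.1.1, ?_⟩
      by_contra hkm
      -- k ≥ m, so a (s+1-m) + m ≤ a (s+1-k) + k ≤ t+1, contradiction
      have hkm' : m ≤ k := by omega
      rcases Nat.eq_or_lt_of_le hkm' with he | hlt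
      · subst he; omega
      · have := tau_strictMono h hm1 hlt hk.1.2
        omega
    have := Finset.card_le_card hsub
    rw [Nat.card_Icc] at this
    omega
  · intro hc
    have hsub : Finset.Icc 1 m ⊆
        ((Finset.Icc 1 s).filter (fun k => a (s + 1 - k) + k ≤ t + 1)) := by
      intro k hk
      simp only [Finset.mem_Icc] at hk
      simp only [Finset.mem_filter, Finset.mem_Icc]
      refine ⟨⟨hk.1, by omega⟩, ?_⟩
      rcases Nat.eq_or_lt_of_le hk.2 with he | hlt
      · subst he; omega
      · have := tau_strictMono h hk.1 hlt hms
        omega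
    have := Finset.card_le_card hsub
    rw [Nat.card_Icc] at this
    omega

lemma isPath_rowPath {c s : ℕ} {a : ℕ → ℕ} (h : IsRow c s a) :
    IsPath c s s (rowPath s a) := by
  constructor
  · intro t ht
    rw [rowPath_false_iff]
    rintro ⟨k, hk1, hk2, hk3⟩
    have h1 := h.anti (Nat.zero_le (s + 1 - k)) (by omega : s + 1 - k ≤ s)
    rw [h.1] at h1
    omega
  · rw [cnt_rowPath h]
    have : ((Finset.Icc 1 s).filter (fun k => a (s + 1 - k) + k ≤ c + s + s + 1)) =
        Finset.Icc 1 s := by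
      apply Finset.filter_true_of_mem
      intro k hk
      simp only [Finset.mem_Icc] at hk
      have h1 := h.anti (Nat.zero_le (s + 1 - k)) (by omega : s + 1 - k ≤ s)
      rw [h.1] at h1
      omega
    rw [this, Nat.card_Icc]
    omega

/-- time just after the `m`-th E-step of `p` -/
noncomputable def stepTime (p : ℕ → Bool) (m : ℕ) : ℕ := sInf {t | m ≤ cnt p t}

section stepTime
variable {c s : ℕ} {p : ℕ → Bool}

lemma stepTime_spec (hp : IsPath c s s p) {m : ℕ} (hm : m ≤ s) : m ≤ cnt p (stepTime p m) := by
  have hne : {t | m ≤ cnt p t}.Nonempty := ⟨c + s + s, by simp only [Set.mem_setOf_eq, hp.2]; omega⟩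
  exact Nat.sInf_mem hne

lemma le_stepTime_iff (hp : IsPath c s s p) {m t : ℕ} (hm : m ≤ s) : stepTime p m ≤ t ↔ m ≤ cnt p t := by
  constructor
  · intro h
    exact le_trans (stepTime_spec hp hm) (cnt_mono p h)
  · intro h
    exact Nat.sInf_le h

lemma cnt_stepTime (hp : IsPath c s s p) {m : ℕ} (hm1 : 1 ≤ m) (hm : m ≤ s) : cnt p (stepTime p m) = m := by
  have h1 := stepTime_spec hp hm
  have h2 : stepTime p m ≠ 0 := by
    intro h0
    rw [h0, cnt_zero] at h1
    omega
  obtain ⟨u, hu⟩ : ∃ u, stepTime p m = u + 1 := ⟨stepTime p m - 1, by omega⟩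
  have h3 : ¬ m ≤ cnt p u := by
    intro hc
    have := Nat.sInf_le (s := {t | m ≤ cnt p t}) hc
    rw [← stepTime] at this
    omega
  have h4 := cnt_succ_le p u
  rw [hu] at h1 ⊢
  omega

lemma stepTime_ge (hp : IsPath c s s p) {m : ℕ} (hm : m ≤ s) : m ≤ stepTime p m :=
  le_trans (stepTime_spec hp hm) (cnt_le_self p _)

lemma stepTime_le (hp : IsPath c s s p) {m : ℕ} (hm : m ≤ s) : stepTime p m ≤ c + s + s := by
  rw [le_stepTime_iff hp hm, hp.2]
  exact hm

lemma stepTime_strictMono (hp : IsPath c s s p) {m m' : ℕ} (hm1 : 1 ≤ m) (hmm : m < m') (hm' : m' ≤ s) :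
    stepTime p m < stepTime p m' := by
  have h1 := cnt_stepTime hp hm1 (by omega : m ≤ s)
  have h2 := cnt_stepTime hp (by omega : 1 ≤ m') hm'
  by_contra hc
  have := cnt_mono p (by omega : stepTime p m' ≤ stepTime p m)
  omega

end stepTime

/-- the row encoded by a path from `(-s,0)` to `(0,c+s)` -/
noncomputable def rowOf (c s : ℕ) (p : ℕ → Bool) : ℕ → ℕ := fun j =>
  if j = 0 then c + s + 1 else if j ≤ s then stepTime p (s + 1 - j) + j - s else 0

lemma rowOf_eq {c s : ℕ} {p : ℕ → Bool} (hp : IsPath c s s p) {j : ℕ} (h1 : 1 ≤ j) (h2 : j ≤ s) :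
    rowOf c s p j + s = stepTime p (s + 1 - j) + j := by
  have := stepTime_ge hp (by omega : s + 1 - j ≤ s)
  rw [rowOf, if_neg (by omega), if_pos h2]
  omega

lemma isRow_rowOf {c s : ℕ} {p : ℕ → Bool} (hp : IsPath c s s p) : IsRow c s (rowOf c s p) := by
  refine ⟨by rw [rowOf, if_pos rfl], ?_, ?_⟩
  · intro j hj
    rcases Nat.eq_zero_or_pos j with h0 | h0
    · subst h0
      have e1 := rowOf_eq hp (le_refl 1) (by omega)
      have e2 := stepTime_le hp (by omega : s + 1 - 1 ≤ s)
      have e3 : rowOf c s p 0 = c + s + 1 := rfl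
      show rowOf c s p 1 ≤ rowOf c s p 0
      omega
    · have e1 := rowOf_eq hp (by omega : 1 ≤ j + 1) (by omega)
      have e2 := rowOf_eq hp h0 (by omega)
      have e3 : stepTime p (s + 1 - (j + 1)) < stepTime p (s + 1 - j) :=
        stepTime_strictMono hp (by omega) (by omega) (by omega)
      omega
  · intro j hj
    rcases Nat.eq_zero_or_pos j with h0 | h0
    · subst h0; rw [rowOf, if_pos rfl]; omega
    · have e1 := rowOf_eq hp h0 hj
      have e2 := stepTime_ge hp (by omega : s + 1 - j ≤ s)
      omega

lemma rowPath_rowOf {c s : ℕ} {p : ℕ → Bool} (hp : IsPath c s s p) :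
    rowPath s (rowOf c s p) = p := by
  funext t
  have key : ∀ k, 1 ≤ k → k ≤ s →
      (t + 2 = rowOf c s p (s + 1 - k) + k ↔ t + 1 = stepTime p k) := by
    intro k hk1 hk2
    have e1 := rowOf_eq hp (by omega : 1 ≤ s + 1 - k) (by omega : s + 1 - k ≤ s)
    have e2 : s + 1 - (s + 1 - k) = k := by omega
    rw [e2] at e1
    omega
  by_cases hpt : p t = true
  · rw [hpt, rowPath_true_iff]
    set m := cnt p (t + 1) with hm
    have h1 : cnt p (t + 1) = cnt p t + 1 := by rw [cnt_succ, hpt]; simp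
    have h2 : m ≤ s := hp.cnt_le (t + 1)
    have h3 : 1 ≤ m := by omega
    refine ⟨m, h3, h2, ?_⟩
    rw [key m h3 h2]
    have h4 : stepTime p m ≤ t + 1 := (le_stepTime_iff hp h2).2 (le_refl m)
    have h5 : ¬ stepTime p m ≤ t := by
      rw [le_stepTime_iff hp h2]
      omega
    omega
  · have hpf : p t = false := by
      cases h : p t
      · rfl
      · exact absurd h hpt
    rw [hpf]
    rw [← Bool.not_eq_true, rowPath_true_iff]
    rintro ⟨k, hk1, hk2, hk3⟩
    rw [key k hk1 hk2] at hk3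
    have h1 : cnt p (t + 1) = cnt p t := by rw [cnt_succ, hpf]; simp
    have h4 : k ≤ cnt p (t + 1) := by
      rw [← le_stepTime_iff hp hk2]
      omega
    have h5 : ¬ k ≤ cnt p t := by
      rw [← le_stepTime_iff hp hk2]
      omega
    omega

lemma rowOf_rowPath {c s : ℕ} {a : ℕ → ℕ} (h : IsRow c s a) {j : ℕ} (hj : j ≤ s) :
    rowOf c s (rowPath s a) j = a j := by
  rcases Nat.eq_zero_or_pos j with h0 | h0
  · subst h0; rw [rowOf, if_pos rfl, h.1]
  · have hp := isPath_rowPath h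
    have hst : stepTime (rowPath s a) (s + 1 - j) = a j + (s + 1 - j) - 1 := by
      have hm1 : 1 ≤ s + 1 - j := by omega
      have hms : s + 1 - j ≤ s := by omega
      have e2 : s + 1 - (s + 1 - j) = j := by omega
      have haj := h.2.2 j hj
      apply le_antisymm
      · rw [le_stepTime_iff hp hms, le_cnt_rowPath_iff h hm1 hms, e2]
        omega
      · by_contra hc
        have h2 : s + 1 - j ≤ cnt (rowPath s a) (stepTime (rowPath s a) (s + 1 - j)) :=
          stepTime_spec hp hms
        rw [le_cnt_rowPath_iff h hm1 hms, e2] at h2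
        omega
    have e1 := rowOf_eq hp h0 hj
    rw [hst] at e1
    have haj := h.2.2 j hj
    omega

/-- The path `q` (from `(-s',0)` to `(0,c+s')`) stays strictly to the left of (above)
the path `p` (from `(-s,0)` to `(0,c+s)`), where `s' < s`. -/
def Dom (c s s' : ℕ) (p q : ℕ → Bool) : Prop :=
  ∀ tq, tq ≤ c + s' + s' → cnt p (tq + (s - s')) + s' < cnt q tq + s

lemma dom_iff_not_meets {c s s' : ℕ} {p q : ℕ → Bool} (hp : IsPath c s s p)
    (hq : IsPath c s' s' q) (hss : s' < s) :
    Dom c s s' p q ↔ ¬ Meets c s s s' s' p q := by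
  constructor
  · rintro hd ⟨tp, tq, htp, htq, hm1, hm2⟩
    obtain ⟨hm1, hm2⟩ := And.intro hm1 hm2
    have he : tp = tq + (s - s') := by omega
    rw [he] at hm2
    have := hd tq htq
    omega
  · intro hnm
    intro tq
    induction tq with
    | zero =>
      intro _
      have h1 : cnt p (0 + (s - s')) + s' ≤ cnt q 0 + s := by
        have := cnt_le_self p (0 + (s - s'))
        omega
      rcases Nat.lt_or_ge (cnt p (0 + (s - s')) + s') (cnt q 0 + s) with h | h
      · exact h
      · exfalso
        exact hnm ⟨0 + (s - s'), 0, by omega, by omega, by omega, by omega⟩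
    | succ u ih =>
      intro hu
      have ihu := ih (by omega)
      have h1 : cnt q u ≤ cnt q (u + 1) := cnt_mono q (by omega)
      have h2 : u + 1 + (s - s') = (u + (s - s')) + 1 := by omega
      have h3 := cnt_succ_le p (u + (s - s'))
      rw [h2]
      rcases Nat.lt_or_ge (cnt p (u + (s - s') + 1) + s') (cnt q (u + 1) + s) with h | h
      · exact h
      · exfalso
        apply hnm
        refine ⟨u + (s - s') + 1, u + 1, by omega, by omega, by omega, by omega⟩

lemma dom_trans {c s s' s'' : ℕ} {p q r : ℕ → Bool} (h1 : Dom c s s' p q)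
    (h2 : Dom c s' s'' q r) (hss : s' < s) (hss' : s'' < s') : Dom c s s'' p r := by
  intro tr htr
  have e1 := h2 tr htr
  have e2 := h1 (tr + (s' - s'')) (by omega)
  have e3 : tr + (s' - s'') + (s - s') = tr + (s - s'') := by omega
  rw [e3] at e2
  omega

/-- Non-intersection of the two row paths is equivalent to strict column decrease. -/
lemma dom_iff_cols {c s s' : ℕ} {a b : ℕ → ℕ} (ha : IsRow c s a) (hb : IsRow c s' b)
    (hss : s' < s) :
    Dom c s s' (rowPath s a) (rowPath s' b) ↔ ∀ j, j ≤ s' → b j < a (j + 1) := by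
  have hpa := isPath_rowPath ha
  have hpb := isPath_rowPath hb
  constructor
  · intro hd j hj
    rcases Nat.eq_zero_or_pos j with h0 | h0
    · -- j = 0 : use tq = c + 2s'
      subst h0
      have h1 := hd (c + s' + s') (le_refl _)
      rw [hpb.2] at h1
      have h2 : ¬ s ≤ cnt (rowPath s a) (c + s' + s' + (s - s')) := by omega
      rw [le_cnt_rowPath_iff ha (by omega) (le_refl s)] at h2
      have e : s + 1 - s = 1 := by omega
      rw [e] at h2
      rw [hb.1]
      have e1 : a (0 + 1) = a 1 := by norm_num
      omega
    · rcases Nat.lt_or_ge (c + s' + j + 1) (a (j + 1)) with hbig | hsmall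
      · -- a (j+1) is large
        have := hb.anti (Nat.zero_le j) hj
        rw [hb.1] at this
        omega
      · -- a (j+1) ≤ c + s' + j + 1
        have ha1 := ha.2.2 (j + 1) (by omega)
        set tq := a (j + 1) + s' - (j + 1) with htq
        have htq1 : tq + (j + 1) = a (j + 1) + s' := by omega
        have htq2 : tq ≤ c + s' + s' := by omega
        have h1 := hd tq htq2
        have h2 : s - j ≤ cnt (rowPath s a) (tq + (s - s')) := by
          rw [le_cnt_rowPath_iff ha (by omega) (by omega)]
          have e : s + 1 - (s - j) = j + 1 := by omega
          rw [e]
          omega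
        have h3 : s' + 1 - j ≤ cnt (rowPath s' b) tq := by omega
        rw [le_cnt_rowPath_iff hb (by omega) (by omega)] at h3
        have e : s' + 1 - (s' + 1 - j) = j := by omega
        rw [e] at h3
        omega
  · intro hcols tq htq
    set m := cnt (rowPath s a) (tq + (s - s')) with hm
    have hms : m ≤ s := hpa.cnt_le _
    rcases Nat.lt_or_ge (m + s') s with htriv | hge
    · omega
    · rcases Nat.eq_or_lt_of_le hms with heq | hlt
      · -- m = s : contradiction with tq ≤ c + 2s'
        exfalso
        have h1 : s ≤ cnt (rowPath s a) (tq + (s - s')) := by omega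
        rw [le_cnt_rowPath_iff ha (by omega) (le_refl s)] at h1
        have e : s + 1 - s = 1 := by omega
        rw [e] at h1
        have h2 := hcols 0 (Nat.zero_le s')
        rw [hb.1] at h2
        have e1 : a (0 + 1) = a 1 := by norm_num
        omega
      · -- s - s' ≤ m ≤ s - 1
        set j := s - m with hj
        have hj1 : 1 ≤ j := by omega
        have hj2 : j ≤ s' := by omega
        have h1 : m ≤ cnt (rowPath s a) (tq + (s - s')) := le_refl m
        rw [le_cnt_rowPath_iff ha (by omega) hms] at h1
        have e : s + 1 - m = j + 1 := by omega
        rw [e] at h1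
        have h2 := hcols j hj2
        have h3 : s' + 1 - j ≤ cnt (rowPath s' b) tq := by
          rw [le_cnt_rowPath_iff hb (by omega) (by omega)]
          have e2 : s' + 1 - (s' + 1 - j) = j := by omega
          rw [e2]
          omega
        omega

open Finset in
section
variable (c n : ℕ)

/-- either a real path from source `a` to sink `b`, or (only when `a = b`) a phantom path -/
def PO (a b : ℕ) : Type := {p : Option (ℕ → Bool) //
  (p = none → a = b) ∧ ∀ f, p = some f → IsPath c a b f}

def poEquiv (a b : ℕ) : PO c a b ≃ ({p : ℕ → Bool // IsPath c a b p} ⊕ PLift (a = b)) where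
  toFun x := match h : x.1 with
    | none => Sum.inr ⟨x.2.1 h⟩
    | some f => Sum.inl ⟨f, x.2.2 f h⟩
  invFun y := match y with
    | Sum.inl fp => ⟨some fp.1, ⟨fun h => (Option.some_ne_none _ h).elim,
        fun g hg => (Option.some.inj hg) ▸ fp.2⟩⟩
    | Sum.inr hh => ⟨none, ⟨fun _ => hh.down, fun g hg => nomatch hg⟩⟩
  left_inv x := by
    rcases x with ⟨p, h1, h2⟩
    cases p <;> rfl
  right_inv y := by
    rcases y with ⟨f, hf⟩ | ⟨h⟩ <;> rfl

noncomputable instance poFintype (a b : ℕ) : Fintype (PO c a b) := by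
  classical exact Fintype.ofEquiv _ (poEquiv c a b).symm

open Classical in
lemma card_PO (a b : ℕ) :
    (Fintype.card (PO c a b) : ℚ) = ((c + a + b).choose a : ℚ) + if a = b then 1 else 0 := by
  classical
  rw [Fintype.card_congr (poEquiv c a b), Fintype.card_sum, card_path]
  by_cases h : a = b
  · rw [if_pos h]
    have : Fintype.card (PLift.{0} (a = b)) = 1 := by
      have : Nonempty (PLift (a = b)) := ⟨⟨h⟩⟩
      have : Subsingleton (PLift (a = b)) := ⟨fun x y => by cases x; cases y; rfl⟩
      exact Fintype.card_eq_one_iff.2 ⟨Classical.arbitrary _, fun y => Subsingleton.elim _ _⟩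
    rw [this]
    push_cast; ring
  · rw [if_neg h]
    have : Fintype.card (PLift.{0} (a = b)) = 0 := by
      have : IsEmpty (PLift (a = b)) := ⟨fun x => h x.down⟩
      exact Fintype.card_eq_zero
    rw [this]
    push_cast; ring

/-- A family: a permutation `σ` together with, for each source `i`, a possibly-phantom path
from source `i` to sink `σ i`. -/
def Fam : Type := Σ σ : Equiv.Perm (Fin n), ∀ i : Fin n, PO c i (σ i)

noncomputable instance famFintype : Fintype (Fam c n) := by
  classical
  unfold Fam
  infer_instance

end

variable {c n : ℕ}

def pv (x : Fam c n) (i : Fin n) : Option (ℕ → Bool) := (x.2 i).1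
noncomputable def pth (x : Fam c n) (i : Fin n) : ℕ → Bool := (pv x i).getD (fun _ => false)

lemma isPath_pth {x : Fam c n} {i : Fin n} (h : pv x i ≠ none) :
    IsPath c i (x.1 i) (pth x i) := by
  rcases hv : pv x i with _ | f
  · exact absurd hv h
  · have := (x.2 i).2.2 f hv
    rw [pth, hv]
    exact this

lemma pv_none {x : Fam c n} {i : Fin n} (h : pv x i = none) : x.1 i = i :=
  (Fin.val_injective ((x.2 i).2.1 h)).symm

/-- real paths `i` and `j` meet -/
def RMeet (x : Fam c n) (i j : Fin n) : Prop :=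
  i ≠ j ∧ pv x i ≠ none ∧ pv x j ≠ none ∧
    Meets c i (x.1 i) j (x.1 j) (pth x i) (pth x j)

lemma rMeet_symm {x : Fam c n} {i j : Fin n} (h : RMeet x i j) : RMeet x j i :=
  ⟨h.1.symm, h.2.2.1, h.2.1, meets_symm h.2.2.2⟩

def Bad (x : Fam c n) : Prop := ∃ i j, RMeet x i j

/-- a family with no meeting pair must have the identity permutation -/
lemma good_perm {x : Fam c n} (h : ¬ Bad x) : x.1 = 1 := by
  by_contra hne
  have : ∃ m, x.1 m ≠ m := by
    by_contra hc
    push_neg at hc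
    exact hne (Equiv.ext hc)
  classical
  obtain ⟨m₀, hm₀⟩ := this
  set S := Finset.univ.filter (fun i => x.1 i ≠ i) with hS
  have hSne : S.Nonempty := ⟨m₀, by simp [hS, hm₀]⟩
  set m := S.min' hSne with hm
  have hmS : m ∈ S := Finset.min'_mem S hSne
  have hmne : x.1 m ≠ m := by
    simp only [hS, Finset.mem_filter] at hmS
    exact hmS.2
  -- σ m > m
  have h1 : m < x.1 m := by
    rcases lt_or_ge m (x.1 m) with h' | h'
    · exact h'
    · exfalso
      have : x.1 m ∈ S := by
        simp only [hS, Finset.mem_filter]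
        refine ⟨Finset.mem_univ _, fun hc => ?_⟩
        exact hmne (x.1.injective hc)
      have := Finset.min'_le S _ this
      rw [← hm] at this
      have : x.1 m = m := le_antisymm h' this
      exact hmne this
  have hi'ne : x.1 (x.1.symm m) = m := x.1.apply_symm_apply m
  set i' := x.1.symm m with hi'
  have h2 : m < i' := by
    rcases lt_or_ge m i' with h' | h'
    · exact h'
    · exfalso
      have hne2 : x.1 i' ≠ i' := by
        intro hc
        rw [hi'ne] at hc
        rw [← hc] at hi'ne
        exact hmne hi'ne
      have hmem : i' ∈ S := by simp [hS, hne2]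
      have hle := Finset.min'_le S _ hmem
      have heq : i' = m := le_antisymm h' hle
      rw [heq] at hi'ne
      exact hmne hi'ne
  have hrm : pv x m ≠ none := fun hc => hmne (pv_none hc)
  have hri' : pv x i' ≠ none := by
    intro hc
    have := pv_none hc
    rw [this] at hi'ne
    rw [hi'ne] at h2
    exact absurd rfl (ne_of_lt h2)
  have ha : (m : ℕ) < (i' : ℕ) := h2
  have hb : ((x.1 i' : Fin n) : ℕ) < ((x.1 m : Fin n) : ℕ) := by
    rw [hi'ne]
    exact h1
  have hcross := crossing (isPath_pth hrm) (isPath_pth hri') ha hb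
  exact h ⟨m, i', ⟨ne_of_lt h2, hrm, hri', hcross⟩⟩

lemma det_expand (c n l : ℕ) (hl : l = c + 1) :
    Matrix.det (Matrix.of fun i j : Fin n =>
        (((i : ℕ) + (j : ℕ) + l - 1).choose (i : ℕ) : ℚ) + if i = j then 1 else 0)
      = ∑ x : Fam c n, ((Equiv.Perm.sign x.1 : ℤ) : ℚ) := by
  classical
  have entry : ∀ i j : Fin n,
      (((i : ℕ) + (j : ℕ) + l - 1).choose (i : ℕ) : ℚ) + (if i = j then 1 else 0)
        = (Fintype.card (PO c i j) : ℚ) := by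
    intro i j
    rw [card_PO]
    have e1 : (i : ℕ) + (j : ℕ) + l - 1 = c + (i : ℕ) + (j : ℕ) := by omega
    rw [e1]
    congr 1
    simp [Fin.val_inj]
  rw [← Matrix.det_transpose, Matrix.det_apply]
  have step : ∀ σ : Equiv.Perm (Fin n),
      Equiv.Perm.sign σ • ∏ i : Fin n,
        (Matrix.of fun i j : Fin n =>
          (((i : ℕ) + (j : ℕ) + l - 1).choose (i : ℕ) : ℚ) + if i = j then 1 else 0).transpose (σ i) i
      = ∑ _f : (∀ i : Fin n, PO c i (σ i)), ((Equiv.Perm.sign σ : ℤ) : ℚ) := by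
    intro σ
    have e2 : ∏ i : Fin n,
        (Matrix.of fun i j : Fin n =>
          (((i : ℕ) + (j : ℕ) + l - 1).choose (i : ℕ) : ℚ) + if i = j then 1 else 0).transpose (σ i) i
        = (Fintype.card (∀ i : Fin n, PO c i (σ i)) : ℚ) := by
      rw [Fintype.card_pi]
      push_cast
      apply Finset.prod_congr rfl
      intro i _
      rw [Matrix.transpose_apply, Matrix.of_apply]
      exact entry i (σ i)
    rw [e2, Finset.sum_const, Finset.card_univ]
    rw [nsmul_eq_mul, mul_comm]
    simp [Units.smul_def, zsmul_eq_mul]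
  rw [Finset.sum_congr rfl (fun σ _ => step σ)]
  refine (Finset.sum_sigma Finset.univ (fun _ => Finset.univ)
    (fun x : Fam c n => ((Equiv.Perm.sign x.1 : ℤ) : ℚ))).symm.trans ?_
  exact Finset.sum_congr (Finset.eq_univ_of_forall fun _ =>
    Finset.mem_sigma.2 ⟨Finset.mem_univ _, Finset.mem_univ _⟩) (fun _ _ => rfl)

lemma pv_eq_some {x : Fam c n} {i : Fin n} (h : pv x i ≠ none) : pv x i = some (pth x i) := by
  rcases hv : pv x i with _ | f
  · exact absurd hv h
  · rw [pth, hv]; rfl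

lemma fam_ext {x y : Fam c n} (h1 : x.1 = y.1) (h2 : ∀ i, pv x i = pv y i) : x = y := by
  rcases x with ⟨σ, f⟩
  rcases y with ⟨τ, g⟩
  cases h1
  congr 1
  funext i
  exact Subtype.ext (h2 i)

open Finset Classical in
noncomputable def famI (x : Fam c n) : Finset (Fin n) :=
  Finset.univ.filter (fun i => ∃ j, RMeet x i j)

lemma famI_nonempty {x : Fam c n} (h : Bad x) : (famI x).Nonempty := by
  obtain ⟨i, j, hij⟩ := h
  exact ⟨i, by classical simpa [famI] using ⟨j, hij⟩⟩

noncomputable def i0 (x : Fam c n) (h : Bad x) : Fin n := (famI x).min' (famI_nonempty h)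

lemma i0_mem {x : Fam c n} (h : Bad x) : ∃ j, RMeet x (i0 x h) j := by
  have := Finset.min'_mem (famI x) (famI_nonempty h)
  classical simpa [famI, i0] using this

lemma i0_min {x : Fam c n} (h : Bad x) {i : Fin n} (hi : ∃ j, RMeet x i j) : i0 x h ≤ i := by
  apply Finset.min'_le
  classical simpa [famI] using hi

/-- `t` is a time at which path `i` meets some other real path of `x` -/
def MT (x : Fam c n) (i : Fin n) (t : ℕ) : Prop :=
  ∃ j : Fin n, j ≠ i ∧ pv x j ≠ none ∧ t ≤ c + i + x.1 i ∧
    ∃ u, u ≤ c + j + x.1 j ∧ MeetAt i j (pth x i) (pth x j) t u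

lemma MT_of_rmeet {x : Fam c n} {i j : Fin n} (h : RMeet x i j) : ∃ t, MT x i t := by
  obtain ⟨hne, hri, hrj, tp, tq, htp, htq, hm⟩ := h
  exact ⟨tp, j, hne.symm, hrj, htp, tq, htq, hm⟩

noncomputable def t0 (x : Fam c n) (h : Bad x) : ℕ := sInf {t | MT x (i0 x h) t}

lemma t0_spec {x : Fam c n} (h : Bad x) : MT x (i0 x h) (t0 x h) := by
  obtain ⟨j, hj⟩ := i0_mem h
  obtain ⟨t, ht⟩ := MT_of_rmeet hj
  exact Nat.sInf_mem (⟨t, ht⟩ : {t | MT x (i0 x h) t}.Nonempty)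

lemma t0_min {x : Fam c n} (h : Bad x) {t : ℕ} (ht : MT x (i0 x h) t) : t0 x h ≤ t :=
  Nat.sInf_le ht

lemma i0_real {x : Fam c n} (h : Bad x) : pv x (i0 x h) ≠ none := by
  obtain ⟨j, hj⟩ := i0_mem h
  exact hj.2.1

open Finset Classical in
noncomputable def famJ (x : Fam c n) (h : Bad x) : Finset (Fin n) :=
  Finset.univ.filter (fun j => j ≠ i0 x h ∧ pv x j ≠ none ∧
    ∃ u, u ≤ c + j + x.1 j ∧ MeetAt (i0 x h) j (pth x (i0 x h)) (pth x j) (t0 x h) u)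

lemma famJ_nonempty {x : Fam c n} (h : Bad x) : (famJ x h).Nonempty := by
  obtain ⟨j, hne, hrj, _, u, hu, hm⟩ := t0_spec h
  exact ⟨j, by classical simpa [famJ] using ⟨hne, hrj, u, hu, hm⟩⟩

noncomputable def i1 (x : Fam c n) (h : Bad x) : Fin n := (famJ x h).min' (famJ_nonempty h)

lemma i1_spec {x : Fam c n} (h : Bad x) : i1 x h ≠ i0 x h ∧ pv x (i1 x h) ≠ none ∧
    ∃ u, u ≤ c + (i1 x h) + x.1 (i1 x h) ∧
      MeetAt (i0 x h) (i1 x h) (pth x (i0 x h)) (pth x (i1 x h)) (t0 x h) u := by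
  have := Finset.min'_mem (famJ x h) (famJ_nonempty h)
  classical simpa [famJ, i1] using this

lemma i1_min {x : Fam c n} (h : Bad x) {j : Fin n} (hj : j ∈ famJ x h) : i1 x h ≤ j :=
  Finset.min'_le _ _ hj

noncomputable def t1 (x : Fam c n) (h : Bad x) : ℕ :=
  t0 x h + (i1 x h : ℕ) - (i0 x h : ℕ)

lemma meetAt_time_eq {a a' : ℕ} {p q : ℕ → Bool} {tp tq tq' : ℕ}
    (h : MeetAt a a' p q tp tq) (h' : MeetAt a a' p q tp tq') : tq = tq' := by
  obtain ⟨h1, _⟩ := h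
  obtain ⟨h1', _⟩ := h'
  omega

lemma rmeet_i0_i1 {x : Fam c n} (h : Bad x) : RMeet x (i0 x h) (i1 x h) := by
  obtain ⟨hne, hr1, u, hu, hm⟩ := i1_spec h
  exact ⟨hne.symm, i0_real h, hr1, t0 x h, u, (t0_spec h).choose_spec.2.2.1, hu, hm⟩

lemma i0_lt_i1 {x : Fam c n} (h : Bad x) : i0 x h < i1 x h := by
  have h1 : i0 x h ≤ i1 x h := i0_min h ⟨i0 x h, rMeet_symm (rmeet_i0_i1 h)⟩
  have h2 := (i1_spec h).1
  exact lt_of_le_of_ne h1 (fun hc => h2 hc.symm)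

lemma t1_spec {x : Fam c n} (h : Bad x) :
    t1 x h ≤ c + (i1 x h) + x.1 (i1 x h) ∧
      MeetAt (i0 x h) (i1 x h) (pth x (i0 x h)) (pth x (i1 x h)) (t0 x h) (t1 x h) := by
  obtain ⟨hne, hr1, u, hu, hm⟩ := i1_spec h
  have he : u = t1 x h := by
    obtain ⟨h1, _⟩ := hm
    have := i0_lt_i1 h
    rw [t1]
    omega
  rw [← he]
  exact ⟨hu, hm⟩

lemma t0_le_len {x : Fam c n} (h : Bad x) : t0 x h ≤ c + (i0 x h) + x.1 (i0 x h) :=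
  (t0_spec h).choose_spec.2.2.1

lemma t0_t1_rel {x : Fam c n} (h : Bad x) :
    t0 x h + (i1 x h : ℕ) = t1 x h + (i0 x h : ℕ) := (t1_spec h).2.1

-- bounds for the spliced paths
lemma t0_le_len' {x : Fam c n} (h : Bad x) : t0 x h ≤ c + (i0 x h) + x.1 (i1 x h) := by
  have h1 := (t1_spec h).1
  have h2 := t0_t1_rel h
  omega

lemma t1_le_len' {x : Fam c n} (h : Bad x) : t1 x h ≤ c + (i1 x h) + x.1 (i0 x h) := by
  have h1 := t0_le_len h
  have h2 := t0_t1_rel h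
  omega

open Classical in
noncomputable def flip (x : Fam c n) (h : Bad x) : Fam c n :=
  ⟨x.1 * Equiv.swap (i0 x h) (i1 x h), fun i =>
    if hi : i = i0 x h then
      ⟨some (splice (pth x (i0 x h)) (pth x (i1 x h)) (t0 x h) (t1 x h)),
        fun hc => (Option.some_ne_none _ hc).elim, fun g hg => by
          have e : (x.1 * Equiv.swap (i0 x h) (i1 x h)) i = x.1 (i1 x h) := by
            rw [hi, Equiv.Perm.mul_apply, Equiv.swap_apply_left]
          rw [e, hi]
          rw [← Option.some.inj hg]
          exact isPath_splice (isPath_pth (i0_real h)) (isPath_pth (i1_spec h).2.1)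
            (t1_spec h).1 (t1_spec h).2⟩
    else if hi' : i = i1 x h then
      ⟨some (splice (pth x (i1 x h)) (pth x (i0 x h)) (t1 x h) (t0 x h)),
        fun hc => (Option.some_ne_none _ hc).elim, fun g hg => by
          have e : (x.1 * Equiv.swap (i0 x h) (i1 x h)) i = x.1 (i0 x h) := by
            rw [hi', Equiv.Perm.mul_apply, Equiv.swap_apply_right]
          rw [e, hi']
          rw [← Option.some.inj hg]
          exact isPath_splice (isPath_pth (i1_spec h).2.1) (isPath_pth (i0_real h))
            (t0_le_len h) (meetAt_symm (t1_spec h).2)⟩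
    else
      ⟨pv x i, fun hc => by
          have e : (x.1 * Equiv.swap (i0 x h) (i1 x h)) i = x.1 i := by
            rw [Equiv.Perm.mul_apply, Equiv.swap_apply_of_ne_of_ne hi hi']
          rw [e]
          exact (x.2 i).2.1 hc,
        fun g hg => by
          have e : (x.1 * Equiv.swap (i0 x h) (i1 x h)) i = x.1 i := by
            rw [Equiv.Perm.mul_apply, Equiv.swap_apply_of_ne_of_ne hi hi']
          rw [e]
          exact (x.2 i).2.2 g hg⟩⟩

lemma flip_fst {x : Fam c n} (h : Bad x) :
    (flip x h).1 = x.1 * Equiv.swap (i0 x h) (i1 x h) := rfl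

lemma flip_fst_apply {x : Fam c n} (h : Bad x) {i : Fin n} (hi : i ≠ i0 x h) (hi' : i ≠ i1 x h) :
    (flip x h).1 i = x.1 i := by
  rw [flip_fst, Equiv.Perm.mul_apply, Equiv.swap_apply_of_ne_of_ne hi hi']

lemma flip_fst_i0 {x : Fam c n} (h : Bad x) : (flip x h).1 (i0 x h) = x.1 (i1 x h) := by
  rw [flip_fst, Equiv.Perm.mul_apply, Equiv.swap_apply_left]

lemma flip_fst_i1 {x : Fam c n} (h : Bad x) : (flip x h).1 (i1 x h) = x.1 (i0 x h) := by
  rw [flip_fst, Equiv.Perm.mul_apply, Equiv.swap_apply_right]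

lemma pv_flip_i0 {x : Fam c n} (h : Bad x) :
    pv (flip x h) (i0 x h) =
      some (splice (pth x (i0 x h)) (pth x (i1 x h)) (t0 x h) (t1 x h)) := by
  show ((flip x h).2 (i0 x h)).1 = _
  rw [flip]
  dsimp only
  exact (congrArg Subtype.val (dif_pos rfl)).trans rfl

lemma pv_flip_i1 {x : Fam c n} (h : Bad x) :
    pv (flip x h) (i1 x h) =
      some (splice (pth x (i1 x h)) (pth x (i0 x h)) (t1 x h) (t0 x h)) := by
  show ((flip x h).2 (i1 x h)).1 = _
  rw [flip]
  have hne : i1 x h ≠ i0 x h := (i1_spec h).1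
  dsimp only
  exact (congrArg Subtype.val ((dif_neg hne).trans (dif_pos rfl))).trans rfl

lemma pv_flip_other {x : Fam c n} (h : Bad x) {i : Fin n} (hi : i ≠ i0 x h)
    (hi' : i ≠ i1 x h) : pv (flip x h) i = pv x i := by
  show ((flip x h).2 i).1 = _
  rw [flip]
  dsimp only
  exact (congrArg Subtype.val ((dif_neg hi).trans (dif_neg hi'))).trans rfl

lemma pth_flip_i0 {x : Fam c n} (h : Bad x) :
    pth (flip x h) (i0 x h) = splice (pth x (i0 x h)) (pth x (i1 x h)) (t0 x h) (t1 x h) := by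
  rw [pth, pv_flip_i0 h]; rfl

lemma pth_flip_i1 {x : Fam c n} (h : Bad x) :
    pth (flip x h) (i1 x h) = splice (pth x (i1 x h)) (pth x (i0 x h)) (t1 x h) (t0 x h) := by
  rw [pth, pv_flip_i1 h]; rfl

lemma pth_flip_other {x : Fam c n} (h : Bad x) {i : Fin n} (hi : i ≠ i0 x h)
    (hi' : i ≠ i1 x h) : pth (flip x h) i = pth x i := by
  rw [pth, pv_flip_other h hi hi', pth]

lemma rmeet_flip_i0_i1 {x : Fam c n} (h : Bad x) :
    RMeet (flip x h) (i0 x h) (i1 x h) := by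
  refine ⟨(ne_of_lt (i0_lt_i1 h)), ?_, ?_, ?_⟩
  · rw [pv_flip_i0 h]; exact Option.some_ne_none _
  · rw [pv_flip_i1 h]; exact Option.some_ne_none _
  · rw [pth_flip_i0 h, pth_flip_i1 h, flip_fst_i0 h, flip_fst_i1 h]
    exact ⟨t0 x h, t1 x h, t0_le_len' h, t1_le_len' h, splice_meetAt (t1_spec h).2⟩

lemma bad_flip {x : Fam c n} (h : Bad x) : Bad (flip x h) :=
  ⟨i0 x h, i1 x h, rmeet_flip_i0_i1 h⟩

lemma sign_flip {x : Fam c n} (h : Bad x) :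
    Equiv.Perm.sign (flip x h).1 = - Equiv.Perm.sign x.1 := by
  rw [flip_fst, Equiv.Perm.sign_mul, Equiv.Perm.sign_swap (ne_of_lt (i0_lt_i1 h)), mul_neg_one]

lemma flip_ne {x : Fam c n} (h : Bad x) : flip x h ≠ x := by
  intro he
  have h1 : (flip x h).1 = x.1 := congrArg Sigma.fst he
  rw [flip_fst] at h1
  rw [mul_eq_left] at h1
  rw [Equiv.swap_eq_one_iff] at h1
  exact (ne_of_lt (i0_lt_i1 h)) h1

/-- Transfer of meets: if a path untouched by the flip meets some path of the flipped family,
it already met some path of the original family. -/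
lemma rmeet_flip_transfer {x : Fam c n} (h : Bad x) {i j : Fin n} (hi0 : i ≠ i0 x h)
    (hi1 : i ≠ i1 x h) (hj : RMeet (flip x h) i j) : ∃ j', RMeet x i j' := by
  obtain ⟨hne, hri, hrj, tp, tq, htp, htq, hm⟩ := hj
  rw [pv_flip_other h hi0 hi1] at hri
  rw [pth_flip_other h hi0 hi1] at hm
  rw [flip_fst_apply h hi0 hi1] at htp
  by_cases hj0 : j = i0 x h
  · subst hj0
    rw [pth_flip_i0 h] at hm
    rw [flip_fst_i0 h] at htq
    rcases le_or_gt tq (t0 x h) with hle | hgt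
    · rw [meetAt_splice_left hle] at hm
      refine ⟨i0 x h, hi0, hri, i0_real h, tp, tq, htp, le_trans hle (t0_le_len h), hm⟩
    · rw [meetAt_splice_right (t1_spec h).2 (le_of_lt hgt)] at hm
      refine ⟨i1 x h, hi1, hri, (i1_spec h).2.1, tp, tq - t0 x h + t1 x h, htp, ?_, hm⟩
      have h1 := t0_t1_rel h
      omega
  · by_cases hj1 : j = i1 x h
    · subst hj1
      rw [pth_flip_i1 h] at hm
      rw [flip_fst_i1 h] at htq
      rcases le_or_gt tq (t1 x h) with hle | hgt
      · rw [meetAt_splice_left hle] at hm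
        refine ⟨i1 x h, hi1, hri, (i1_spec h).2.1, tp, tq, htp,
          le_trans hle (t1_spec h).1, hm⟩
      · rw [meetAt_splice_right (meetAt_symm (t1_spec h).2) (le_of_lt hgt)] at hm
        refine ⟨i0 x h, hi0, hri, i0_real h, tp, tq - t1 x h + t0 x h, htp, ?_, hm⟩
        have h1 := t0_t1_rel h
        have h2 := t0_le_len h
        omega
    · rw [pv_flip_other h hj0 hj1] at hrj
      rw [pth_flip_other h hj0 hj1] at hm
      rw [flip_fst_apply h hj0 hj1] at htq
      exact ⟨j, hne, hri, hrj, tp, tq, htp, htq, hm⟩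

lemma i0_flip {x : Fam c n} (h : Bad x) : i0 (flip x h) (bad_flip h) = i0 x h := by
  apply le_antisymm
  · exact i0_min (bad_flip h) ⟨i1 x h, rmeet_flip_i0_i1 h⟩
  · set i' := i0 (flip x h) (bad_flip h) with hi'
    by_cases h0 : i' = i0 x h
    · rw [h0]
    · by_cases h1 : i' = i1 x h
      · rw [h1]; exact le_of_lt (i0_lt_i1 h)
      · obtain ⟨j, hj⟩ := i0_mem (bad_flip h)
        rw [← hi'] at hj
        exact i0_min h (rmeet_flip_transfer h h0 h1 hj)

lemma t0_flip {x : Fam c n} (h : Bad x) : t0 (flip x h) (bad_flip h) = t0 x h := by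
  have e := i0_flip h
  have hmem : MT (flip x h) (i0 x h) (t0 x h) := by
    refine ⟨i1 x h, (i1_spec h).1, ?_, ?_, t1 x h, ?_, ?_⟩
    · rw [pv_flip_i1 h]; exact Option.some_ne_none _
    · rw [flip_fst_i0 h]; exact t0_le_len' h
    · rw [flip_fst_i1 h]; exact t1_le_len' h
    · rw [pth_flip_i0 h, pth_flip_i1 h]; exact splice_meetAt (t1_spec h).2
  have hlb : ∀ t, MT (flip x h) (i0 x h) t → t0 x h ≤ t := by
    intro t ht
    rcases le_or_gt (t0 x h) t with hle | hlt
    · exact hle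
    · exfalso
      obtain ⟨j, hjne, hjr, htl, u, hu, hm⟩ := ht
      rw [pth_flip_i0 h] at hm
      have hm2 := meetAt_symm hm
      rw [meetAt_splice_left (le_of_lt hlt)] at hm2
      have hm3 := meetAt_symm hm2
      by_cases hj1 : j = i1 x h
      · subst hj1
        rw [pth_flip_i1 h] at hm3
        rw [flip_fst_i1 h] at hu
        rcases le_or_gt u (t1 x h) with hule | hugt
        · rw [meetAt_splice_left hule] at hm3
          have : MT x (i0 x h) t := ⟨i1 x h, (i1_spec h).1, (i1_spec h).2.1,
            le_trans (le_of_lt hlt) (t0_le_len h), u, le_trans hule (t1_spec h).1, hm3⟩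
          exact absurd (t0_min h this) (by omega)
        · rw [meetAt_splice_right (meetAt_symm (t1_spec h).2) (le_of_lt hugt)] at hm3
          have := hm3.1
          omega
      · have hj0 : j ≠ i0 x h := hjne
        rw [pth_flip_other h hj0 hj1] at hm3
        rw [pv_flip_other h hj0 hj1] at hjr
        rw [flip_fst_apply h hj0 hj1] at hu
        have : MT x (i0 x h) t := ⟨j, hjne, hjr, le_trans (le_of_lt hlt) (t0_le_len h),
          u, hu, hm3⟩
        exact absurd (t0_min h this) (by omega)
  apply le_antisymm
  · rw [t0]
    rw [e]
    exact Nat.sInf_le hmem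
  · have hspec := t0_spec (bad_flip h)
    rw [e] at hspec
    exact hlb _ hspec

lemma t1_gt_t0_cases {x : Fam c n} (h : Bad x) : True := trivial

lemma famJ_flip {x : Fam c n} (h : Bad x) : famJ (flip x h) (bad_flip h) = famJ x h := by
  classical
  have e0 := i0_flip h
  have et := t0_flip h
  ext j
  simp only [famJ, Finset.mem_filter, Finset.mem_univ, true_and, e0, et]
  by_cases hj0 : j = i0 x h
  · subst hj0
    simp
  · by_cases hj1 : j = i1 x h
    · subst hj1
      constructor
      · intro _
        refine ⟨(i1_spec h).1, (i1_spec h).2.1, t1 x h, (t1_spec h).1, (t1_spec h).2⟩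
      · intro _
        refine ⟨(i1_spec h).1, ?_, t1 x h, ?_, ?_⟩
        · rw [pv_flip_i1 h]; exact Option.some_ne_none _
        · rw [flip_fst_i1 h]; exact t1_le_len' h
        · rw [pth_flip_i0 h, pth_flip_i1 h]; exact splice_meetAt (t1_spec h).2
    · rw [pv_flip_other h hj0 hj1, pth_flip_other h hj0 hj1, pth_flip_i0 h,
        flip_fst_apply h hj0 hj1]
      constructor
      · rintro ⟨hne, hr, u, hu, hm⟩
        have hm2 := meetAt_symm hm
        rw [meetAt_splice_left (le_refl (t0 x h))] at hm2
        exact ⟨hne, hr, u, hu, meetAt_symm hm2⟩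
      · rintro ⟨hne, hr, u, hu, hm⟩
        have hm2 := meetAt_symm hm
        rw [← meetAt_splice_left (p := pth x (i0 x h)) (q := pth x (i1 x h))
          (tq := t1 x h) (le_refl (t0 x h))] at hm2
        exact ⟨hne, hr, u, hu, meetAt_symm hm2⟩

lemma min'_congr {s t : Finset (Fin n)} (hs : s.Nonempty) (ht : t.Nonempty) (h : s = t) :
    s.min' hs = t.min' ht := by subst h; rfl

lemma i1_flip {x : Fam c n} (h : Bad x) : i1 (flip x h) (bad_flip h) = i1 x h :=
  min'_congr _ _ (famJ_flip h)

lemma t1_flip {x : Fam c n} (h : Bad x) : t1 (flip x h) (bad_flip h) = t1 x h := by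
  rw [t1, t1, t0_flip h, i0_flip h, i1_flip h]

lemma flip_flip {x : Fam c n} (h : Bad x) : flip (flip x h) (bad_flip h) = x := by
  apply fam_ext
  · rw [flip_fst, flip_fst, i0_flip h, i1_flip h, mul_assoc, Equiv.swap_mul_self, mul_one]
  · intro i
    have e0 := i0_flip h
    have e1 := i1_flip h
    have et0 := t0_flip h
    have et1 := t1_flip h
    by_cases h0 : i = i0 x h
    · subst h0
      have key := pv_flip_i0 (bad_flip h)
      rw [e0, e1, et0, et1] at key
      rw [key, pth_flip_i0 h, pth_flip_i1 h, splice_splice]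
      exact (pv_eq_some (i0_real h)).symm
    · by_cases h1 : i = i1 x h
      · subst h1
        have key := pv_flip_i1 (bad_flip h)
        rw [e0, e1, et0, et1] at key
        rw [key, pth_flip_i0 h, pth_flip_i1 h, splice_splice]
        exact (pv_eq_some (i1_spec h).2.1).symm
      · rw [pv_flip_other (bad_flip h) (by rw [e0]; exact h0) (by rw [e1]; exact h1),
          pv_flip_other h h0 h1]

open Finset Classical in
lemma sum_sign_eq_card (c n : ℕ) :
    ∑ x : Fam c n, ((Equiv.Perm.sign x.1 : ℤ) : ℚ)
      = ((Finset.univ.filter (fun x : Fam c n => ¬ Bad x)).card : ℚ) := by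
  classical
  rw [← Finset.sum_filter_add_sum_filter_not Finset.univ Bad
    (fun x : Fam c n => ((Equiv.Perm.sign x.1 : ℤ) : ℚ))]
  have h1 : ∑ x ∈ Finset.univ.filter (fun x : Fam c n => Bad x),
      ((Equiv.Perm.sign x.1 : ℤ) : ℚ) = 0 := by
    apply Finset.sum_involution (g := fun x hx => flip x (Finset.mem_filter.1 hx).2)
    · intro x hx
      rw [sign_flip (Finset.mem_filter.1 hx).2]
      push_cast
      ring
    · intro x hx _
      exact flip_ne (Finset.mem_filter.1 hx).2
    · intro x hx
      exact flip_flip (Finset.mem_filter.1 hx).2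
    · intro x hx
      exact Finset.mem_filter.2 ⟨Finset.mem_univ _, bad_flip (Finset.mem_filter.1 hx).2⟩
  rw [h1, zero_add]
  rw [Finset.sum_congr rfl (fun x hx => by
    rw [good_perm (Finset.mem_filter.1 hx).2, Equiv.Perm.sign_one]
    norm_num : ∀ x ∈ Finset.univ.filter (fun x : Fam c n => ¬ Bad x),
      ((Equiv.Perm.sign x.1 : ℤ) : ℚ) = 1)]
  rw [Finset.sum_const, nsmul_eq_mul, mul_one]

/-- a "good family": for each possible source `i` an optional path from `i` to `i`,
pairwise non-meeting. -/
def GF (c n : ℕ) : Type := {o : (i : Fin n) → Option (ℕ → Bool) //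
  (∀ (i : Fin n) f, o i = some f → IsPath c i i f) ∧
  ∀ (i j : Fin n) f g, i ≠ j → o i = some f → o j = some g →
    ¬ Meets c i i j j f g}

noncomputable def goodEquiv (c n : ℕ) : {x : Fam c n // ¬ Bad x} ≃ GF c n where
  toFun x := ⟨fun i => pv x.1 i, by
    constructor
    · intro i f hf
      have hf' : pv x.1 i = some f := hf
      have h1 := (x.1.2 i).2.2 f hf'
      rw [good_perm x.2] at h1
      exact h1
    · intro i j f g hne hf hg hm
      have hf' : pv x.1 i = some f := hf
      have hg' : pv x.1 j = some g := hg
      apply x.2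
      refine ⟨i, j, hne, by rw [hf']; exact Option.some_ne_none _,
        by rw [hg']; exact Option.some_ne_none _, ?_⟩
      have hpi : pth x.1 i = f := by rw [pth, hf']; rfl
      have hpj : pth x.1 j = g := by rw [pth, hg']; rfl
      rw [hpi, hpj, good_perm x.2]
      exact hm⟩
  invFun o := ⟨⟨1, fun i => ⟨o.1 i, fun _ => rfl, fun f hf => o.2.1 i f hf⟩⟩, by
    rintro ⟨i, j, hne, hri, hrj, hm⟩
    have hri' : o.1 i ≠ none := hri
    have hrj' : o.1 j ≠ none := hrj
    rcases ho : o.1 i with _ | f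
    · exact hri' ho
    rcases ho2 : o.1 j with _ | g
    · exact hrj' ho2
    have hpi : pth (⟨1, fun i => ⟨o.1 i, fun _ => rfl, fun f hf => o.2.1 i f hf⟩⟩ : Fam c n) i
        = f := by
      show (o.1 i).getD _ = f
      rw [ho]
      rfl
    have hpj : pth (⟨1, fun i => ⟨o.1 i, fun _ => rfl, fun f hf => o.2.1 i f hf⟩⟩ : Fam c n) j
        = g := by
      show (o.1 j).getD _ = g
      rw [ho2]
      rfl
    rw [hpi, hpj] at hm
    exact o.2.2 i j f g hne ho ho2 hm⟩
  left_inv x := by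
    apply Subtype.ext
    apply fam_ext
    · exact (good_perm x.2).symm
    · intro i; rfl
  right_inv o := by
    apply Subtype.ext
    funext i
    rfl

lemma _root_.CSSPP.ext' {A B : CSSPP c n} (h1 : A.rows = B.rows) (h2 : A.len = B.len)
    (h3 : A.part = B.part) : A = B := by
  cases A; cases B
  cases h1; cases h2; cases h3
  rfl

lemma _root_.CSSPP.len_anti (C : CSSPP c n) {k k' : ℕ} (h : k < k') (h' : k' < C.rows) :
    C.len k' < C.len k := by
  induction k' with
  | zero => omega
  | succ u ih =>
    have hu := C.len_strict u h'
    rcases Nat.eq_or_lt_of_le (Nat.lt_succ_iff.1 h) with he | hlt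
    · rw [he]; exact hu
    · exact lt_trans hu (ih hlt (by omega))

lemma _root_.CSSPP.len_le_len0 (C : CSSPP c n) {k : ℕ} (h : k < C.rows) : C.len k ≤ C.len 0 := by
  rcases Nat.eq_zero_or_pos k with h0 | h0
  · rw [h0]
  · exact le_of_lt (C.len_anti h0 h)

lemma _root_.CSSPP.len_le_n (C : CSSPP c n) {k : ℕ} (h : k < C.rows) : C.len k ≤ n :=
  le_trans (C.len_le_len0 h) (C.first_row_le (by omega))

lemma _root_.CSSPP.len_inj (C : CSSPP c n) {k k' : ℕ} (hk : k < C.rows) (hk' : k' < C.rows)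
    (h : C.len k = C.len k') : k = k' := by
  rcases lt_trichotomy k k' with hlt | he | hlt
  · have := C.len_anti hlt hk'; omega
  · exact he
  · have := C.len_anti hlt hk; omega

lemma _root_.CSSPP.isRow (C : CSSPP c n) {k : ℕ} (h : k < C.rows) :
    IsRow c (C.len k - 1) (C.part k) := by
  have hpos := C.len_pos k h
  refine ⟨?_, ?_, ?_⟩
  · rw [C.class_eq k h]; omega
  · intro j hj; exact C.row_weak_dec k j h (by omega)
  · intro j hj; exact C.part_pos k j h (by omega)

lemma csspp_dom (C : CSSPP c n) {k k' : ℕ} (h : k < k') (h' : k' < C.rows) :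
    Dom c (C.len k - 1) (C.len k' - 1) (rowPath (C.len k - 1) (C.part k))
      (rowPath (C.len k' - 1) (C.part k')) := by
  have hcons : ∀ m, m + 1 < C.rows → Dom c (C.len m - 1) (C.len (m + 1) - 1)
      (rowPath (C.len m - 1) (C.part m)) (rowPath (C.len (m + 1) - 1) (C.part (m + 1))) := by
    intro m hm
    have hlt : C.len (m + 1) < C.len m := C.len_strict m hm
    have hpos := C.len_pos (m + 1) hm
    rw [dom_iff_cols (C.isRow (by omega)) (C.isRow hm) (by omega)]
    intro j hj
    exact C.col_strict_dec m j hm (by omega)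
  induction k' with
  | zero => omega
  | succ u ih =>
    rcases Nat.eq_or_lt_of_le (Nat.lt_succ_iff.1 h) with he | hlt
    · rw [he]; exact hcons u h'
    · have h1 := ih hlt (by omega)
      have h2 := hcons u h'
      have e1 : C.len u < C.len k := C.len_anti hlt (by omega)
      have e2 : C.len (u + 1) < C.len u := C.len_strict u h'
      have e3 := C.len_pos (u + 1) h'
      exact dom_trans h1 h2 (by omega) (by omega)

lemma csspp_not_meets (C : CSSPP c n) {k k' : ℕ} (hk : k < C.rows) (hk' : k' < C.rows)
    (hne : k ≠ k') :
    ¬ Meets c (C.len k - 1) (C.len k - 1) (C.len k' - 1) (C.len k' - 1)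
      (rowPath (C.len k - 1) (C.part k)) (rowPath (C.len k' - 1) (C.part k')) := by
  rcases lt_trichotomy k k' with hlt | he | hlt
  · have := C.len_anti hlt hk'
    have := C.len_pos k' hk'
    exact (dom_iff_not_meets (isPath_rowPath (C.isRow hk)) (isPath_rowPath (C.isRow hk'))
      (by omega)).1 (csspp_dom C hlt hk')
  · exact absurd he hne
  · have := C.len_anti hlt hk
    have := C.len_pos k hk
    intro hm
    exact (dom_iff_not_meets (isPath_rowPath (C.isRow hk')) (isPath_rowPath (C.isRow hk))
      (by omega)).1 (csspp_dom C hlt hk) (meets_symm hm)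

open Classical in
noncomputable def fromGFo (C : CSSPP c n) : (i : Fin n) → Option (ℕ → Bool) := fun i =>
  if h : ∃ k, k < C.rows ∧ C.len k = (i : ℕ) + 1 then
    some (rowPath i (C.part (Classical.choose h)))
  else none

lemma isRow_of_len {C : CSSPP c n} {k : ℕ} {i : Fin n} (hk : k < C.rows)
    (hlen : C.len k = (i : ℕ) + 1) : IsRow c i (C.part k) := by
  have := C.isRow hk
  rw [hlen] at this
  simpa using this

open Classical in
noncomputable def fromCSSPP (C : CSSPP c n) : GF c n := by
  refine ⟨fromGFo C, ?_, ?_⟩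
  · intro i f hf
    rw [fromGFo] at hf
    split at hf
    · rename_i h
      have hspec := Classical.choose_spec h
      rw [← Option.some.inj hf]
      exact isPath_rowPath (isRow_of_len hspec.1 hspec.2)
    · exact absurd hf (fun h => nomatch h)
  · intro i j f g hne hf hg hm
    rw [fromGFo] at hf hg
    split at hf
    · rename_i h
      split at hg
      · rename_i h'
        have hspec := Classical.choose_spec h
        have hspec' := Classical.choose_spec h'
        set k := Classical.choose h
        set k' := Classical.choose h'
        have hkk : k ≠ k' := by
          intro he
          apply hne
          have : (i : ℕ) = (j : ℕ) := by
            have e1 := hspec.2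
            have e2 := hspec'.2
            rw [he] at e1
            omega
          exact Fin.val_injective this
        have hnm := csspp_not_meets C hspec.1 hspec'.1 hkk
        rw [hspec.2, hspec'.2] at hnm
        simp only [Nat.add_sub_cancel] at hnm
        rw [← Option.some.inj hf, ← Option.some.inj hg] at hm
        exact hnm hm
      · exact absurd hg (fun h => nomatch h)
    · exact absurd hf (fun h => nomatch h)

def pthO (o : GF c n) (s : Fin n) : ℕ → Bool := (o.1 s).getD (fun _ => false)

lemma pthO_some {o : GF c n} {s : Fin n} (h : o.1 s ≠ none) : o.1 s = some (pthO o s) := by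
  rcases ho : o.1 s with _ | f
  · exact absurd ho h
  · rw [pthO, ho]; rfl

lemma pthO_isPath {o : GF c n} {s : Fin n} (h : o.1 s ≠ none) :
    IsPath c s s (pthO o s) := o.2.1 s _ (pthO_some h)

open Classical in
noncomputable def gfS (o : GF c n) : Finset (Fin n) :=
  Finset.univ.filter (fun s => o.1 s ≠ none)

lemma mem_gfS {o : GF c n} {s : Fin n} : s ∈ gfS o ↔ o.1 s ≠ none := by
  classical
  simp [gfS]

noncomputable def gfsrc (o : GF c n) (i : ℕ) (h : i < (gfS o).card) : Fin n :=
  (gfS o).orderEmbOfFin rfl ⟨(gfS o).card - 1 - i, by omega⟩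

lemma gfsrc_mem (o : GF c n) (i : ℕ) (h : i < (gfS o).card) : gfsrc o i h ∈ gfS o :=
  Finset.orderEmbOfFin_mem _ _ _

lemma gfsrc_real (o : GF c n) (i : ℕ) (h : i < (gfS o).card) : o.1 (gfsrc o i h) ≠ none :=
  mem_gfS.1 (gfsrc_mem o i h)

lemma gfsrc_anti (o : GF c n) {i i' : ℕ} (hii : i < i') (h : i < (gfS o).card)
    (h' : i' < (gfS o).card) : gfsrc o i' h' < gfsrc o i h := by
  apply ((gfS o).orderEmbOfFin rfl).strictMono
  show ((gfS o).card - 1 - i' : ℕ) < (gfS o).card - 1 - i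
  omega

lemma rowOf_zero_of_gt {s j : ℕ} (p : ℕ → Bool) (hj : s < j) : rowOf c s p j = 0 := by
  rw [rowOf, if_neg (by omega), if_neg (by omega)]

noncomputable def toCSSPP (o : GF c n) : CSSPP c n where
  rows := (gfS o).card
  len := fun i => if h : i < (gfS o).card then (gfsrc o i h : ℕ) + 1 else 0
  part := fun i j => if h : i < (gfS o).card then
    rowOf c (gfsrc o i h) (pthO o (gfsrc o i h)) j else 0
  len_strict := by
    intro i hi
    rw [dif_pos hi, dif_pos (by omega : i < (gfS o).card)]
    have := gfsrc_anti o (by omega : i < i + 1) (by omega) hi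
    exact Nat.add_lt_add_right this 1
  len_pos := by
    intro i hi
    rw [dif_pos hi]
    omega
  first_row_le := by
    intro hr
    rw [dif_pos hr]
    exact (gfsrc o 0 hr).isLt
  part_pos := by
    intro i j hi hj
    rw [dif_pos hi] at hj ⊢
    exact (isRow_rowOf (pthO_isPath (gfsrc_real o i hi))).2.2 j (by omega)
  row_weak_dec := by
    intro i j hi hj
    simp only [dif_pos hi] at hj ⊢
    exact (isRow_rowOf (pthO_isPath (gfsrc_real o i hi))).2.1 j (by omega)
  col_strict_dec := by
    intro i j hi hj
    have hii : i < (gfS o).card := by omega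
    rw [dif_pos hi] at hj
    rw [dif_pos hi, dif_pos hii]
    set s := gfsrc o i hii with hs
    set s' := gfsrc o (i + 1) hi with hs'
    have hlt : s' < s := gfsrc_anti o (by omega) hii hi
    have hps : IsPath c s s (pthO o s) := pthO_isPath (gfsrc_real o i hii)
    have hps' : IsPath c s' s' (pthO o s') := pthO_isPath (gfsrc_real o (i + 1) hi)
    have hrow : IsRow c s (rowOf c s (pthO o s)) := isRow_rowOf hps
    have hrow' : IsRow c s' (rowOf c s' (pthO o s')) := isRow_rowOf hps'
    have hnm : ¬ Meets c s s s' s' (pthO o s) (pthO o s') :=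
      o.2.2 s s' _ _ (by intro he; rw [he] at hlt; exact lt_irrefl _ hlt)
        (pthO_some (gfsrc_real o i hii)) (pthO_some (gfsrc_real o (i + 1) hi))
    have hdom : Dom c s s' (pthO o s) (pthO o s') :=
      (dom_iff_not_meets hps hps' hlt).2 hnm
    have hdom2 : Dom c s s' (rowPath s (rowOf c s (pthO o s)))
        (rowPath s' (rowOf c s' (pthO o s'))) := by
      rw [rowPath_rowOf hps, rowPath_rowOf hps']
      exact hdom
    exact (dom_iff_cols hrow hrow' hlt).1 hdom2 j (by omega)
  class_eq := by
    intro i hi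
    simp only [dif_pos hi]
    rw [rowOf, if_pos rfl]
    omega
  len_eq_zero := by
    intro i hi
    rw [dif_neg (by omega)]
  part_eq_zero := by
    intro i j hij
    by_cases hi : i < (gfS o).card
    · rw [dif_pos hi]
      rw [dif_pos hi] at hij
      push_neg at hij
      exact rowOf_zero_of_gt _ (by have := hij hi; omega)
    · rw [dif_neg hi]

lemma fromGFo_eq_some {C : CSSPP c n} {s : Fin n}
    (h : ∃ k, k < C.rows ∧ C.len k = (s : ℕ) + 1) :
    fromGFo C s = some (rowPath s (C.part (Classical.choose h))) := dif_pos h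

lemma fromGFo_eq_none {C : CSSPP c n} {s : Fin n}
    (h : ¬ ∃ k, k < C.rows ∧ C.len k = (s : ℕ) + 1) : fromGFo C s = none := dif_neg h

lemma fromCSSPP_val (C : CSSPP c n) : (fromCSSPP C).1 = fromGFo C := rfl

lemma mem_gfS_fromCSSPP {C : CSSPP c n} {s : Fin n} :
    s ∈ gfS (fromCSSPP C) ↔ ∃ k, k < C.rows ∧ C.len k = (s : ℕ) + 1 := by
  rw [mem_gfS, fromCSSPP_val]
  constructor
  · intro hne
    by_contra hc
    exact hne (fromGFo_eq_none hc)
  · intro h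
    rw [fromGFo_eq_some h]
    exact Option.some_ne_none _

/-- the enumeration of the row lengths of `C`, as elements of `Fin n` -/
def rowg (C : CSSPP c n) (k : Fin C.rows) : Fin n :=
  ⟨C.len k - 1, by
    have h1 := C.len_le_n k.2
    have h2 := C.len_pos k k.2
    omega⟩

lemma gfS_fromCSSPP (C : CSSPP c n) :
    gfS (fromCSSPP C) = Finset.univ.image (rowg C) := by
  ext s
  rw [mem_gfS_fromCSSPP, Finset.mem_image]
  constructor
  · rintro ⟨k, hk, he⟩
    refine ⟨⟨k, hk⟩, Finset.mem_univ _, ?_⟩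
    apply Fin.val_injective
    show C.len k - 1 = (s : ℕ)
    omega
  · rintro ⟨k, -, he⟩
    refine ⟨k, k.2, ?_⟩
    have : C.len k - 1 = (s : ℕ) := congrArg Fin.val he
    have := C.len_pos k k.2
    omega

lemma rowg_inj (C : CSSPP c n) : Function.Injective (rowg C) := by
  intro k k' h
  have h1 : C.len k - 1 = C.len k' - 1 := congrArg Fin.val h
  have h2 := C.len_pos k k.2
  have h3 := C.len_pos k' k'.2
  apply Fin.val_injective
  exact C.len_inj k.2 k'.2 (by omega)

lemma card_gfS_fromCSSPP (C : CSSPP c n) : (gfS (fromCSSPP C)).card = C.rows := by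
  rw [gfS_fromCSSPP, Finset.card_image_of_injective _ (rowg_inj C), Finset.card_univ,
    Fintype.card_fin]

lemma gfsrc_fromCSSPP (C : CSSPP c n) {i : ℕ} (h : i < (gfS (fromCSSPP C)).card) :
    (gfsrc (fromCSSPP C) i h : ℕ) = C.len i - 1 := by
  have hr := card_gfS_fromCSSPP C
  set f : Fin (gfS (fromCSSPP C)).card → Fin n :=
    fun m => rowg C ⟨C.rows - 1 - (m : ℕ), by omega⟩ with hf
  have hfs : ∀ m, f m ∈ gfS (fromCSSPP C) := by
    intro m
    rw [gfS_fromCSSPP]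
    exact Finset.mem_image_of_mem _ (Finset.mem_univ _)
  have hmono : StrictMono f := by
    intro m m' hmm
    show (rowg C _ : ℕ) < (rowg C _ : ℕ)
    show C.len (C.rows - 1 - (m : ℕ)) - 1 < C.len (C.rows - 1 - (m' : ℕ)) - 1
    have hm := m.2
    have hm' := m'.2
    have hanti := C.len_anti (show C.rows - 1 - (m' : ℕ) < C.rows - 1 - (m : ℕ) by omega)
      (by omega)
    have hp := C.len_pos (C.rows - 1 - (m : ℕ)) (by omega)
    omega
  have huniq := Finset.orderEmbOfFin_unique (f := f) rfl hfs hmono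
  have : gfsrc (fromCSSPP C) i h = f ⟨(gfS (fromCSSPP C)).card - 1 - i, by omega⟩ := by
    rw [gfsrc, huniq]
  rw [this]
  show C.len (C.rows - 1 - ((gfS (fromCSSPP C)).card - 1 - i)) - 1 = C.len i - 1
  congr 2
  omega

lemma toCSSPP_fromCSSPP (C : CSSPP c n) : toCSSPP (fromCSSPP C) = C := by
  have hr := card_gfS_fromCSSPP C
  apply CSSPP.ext'
  · exact hr
  · funext i
    show (if h : i < (gfS (fromCSSPP C)).card then (gfsrc (fromCSSPP C) i h : ℕ) + 1 else 0)
      = C.len i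
    by_cases hi : i < (gfS (fromCSSPP C)).card
    · rw [dif_pos hi, gfsrc_fromCSSPP C hi]
      have := C.len_pos i (by omega)
      omega
    · rw [dif_neg hi, C.len_eq_zero i (by omega)]
  · funext i j
    show (if h : i < (gfS (fromCSSPP C)).card then
        rowOf c (gfsrc (fromCSSPP C) i h : ℕ)
          (pthO (fromCSSPP C) (gfsrc (fromCSSPP C) i h)) j else 0) = C.part i j
    by_cases hi : i < (gfS (fromCSSPP C)).card
    · rw [dif_pos hi]
      set s := gfsrc (fromCSSPP C) i hi with hs
      have hsv : (s : ℕ) = C.len i - 1 := gfsrc_fromCSSPP C hi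
      have hirow : i < C.rows := by omega
      have hpos := C.len_pos i hirow
      have hlen : C.len i = (s : ℕ) + 1 := by omega
      have hex : ∃ k, k < C.rows ∧ C.len k = (s : ℕ) + 1 := ⟨i, hirow, hlen⟩
      have hval : (fromCSSPP C).1 s = some (rowPath s (C.part (Classical.choose hex))) := by
        rw [fromCSSPP_val, fromGFo_eq_some hex]
      have hspec := Classical.choose_spec hex
      have hk0 : Classical.choose hex = i :=
        C.len_inj hspec.1 hirow (by omega)
      rw [hk0] at hval
      have hpth : pthO (fromCSSPP C) s = rowPath s (C.part i) := by
        rw [pthO, hval]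
        rfl
      rw [hpth]
      have hisrow : IsRow c s (C.part i) := isRow_of_len hirow hlen
      by_cases hj : j ≤ (s : ℕ)
      · exact rowOf_rowPath hisrow hj
      · rw [rowOf_zero_of_gt _ (by omega)]
        rw [C.part_eq_zero i j (by omega)]
    · rw [dif_neg hi]
      rw [C.part_eq_zero i j (by omega)]

lemma fromCSSPP_toCSSPP (o : GF c n) : fromCSSPP (toCSSPP o) = o := by
  apply Subtype.ext
  funext s
  rw [fromCSSPP_val]
  have hlen : ∀ (k : ℕ) (hk : k < (gfS o).card), (toCSSPP o).len k = (gfsrc o k hk : ℕ) + 1 := by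
    intro k hk
    show (if h : k < (gfS o).card then (gfsrc o k h : ℕ) + 1 else 0) = _
    rw [dif_pos hk]
  have hrows : (toCSSPP o).rows = (gfS o).card := rfl
  rcases hs : o.1 s with _ | f
  · -- s not in the support
    rw [fromGFo_eq_none]
    rintro ⟨k, hk, he⟩
    rw [hrows] at hk
    rw [hlen k hk] at he
    have : gfsrc o k hk = s := Fin.val_injective (by omega)
    have hmem := gfsrc_real o k hk
    rw [this, hs] at hmem
    exact hmem rfl
  · -- s is in the support
    have hmem : s ∈ gfS o := mem_gfS.2 (by rw [hs]; exact Option.some_ne_none _)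
    have hrange : ∃ m : Fin (gfS o).card, (gfS o).orderEmbOfFin rfl m = s := by
      have h2 : s ∈ Set.range ((gfS o).orderEmbOfFin rfl) := by
        rw [Finset.range_orderEmbOfFin]
        exact Finset.mem_coe.2 hmem
      exact h2
    obtain ⟨m, hm⟩ := hrange
    have hk : (gfS o).card - 1 - (m : ℕ) < (gfS o).card := by
      have := m.2
      omega
    have hsrc : gfsrc o ((gfS o).card - 1 - (m : ℕ)) hk = s := by
      rw [gfsrc, ← hm]
      congr 1
      apply Fin.val_injective
      show (gfS o).card - 1 - ((gfS o).card - 1 - (m : ℕ)) = (m : ℕ)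
      have := m.2
      omega
    have hex : ∃ k, k < (toCSSPP o).rows ∧ (toCSSPP o).len k = (s : ℕ) + 1 := by
      refine ⟨(gfS o).card - 1 - (m : ℕ), by rw [hrows]; exact hk, ?_⟩
      rw [hlen _ hk, hsrc]
    rw [fromGFo_eq_some hex]
    rw [← hs]
    have hspec := Classical.choose_spec hex
    set k0 := Classical.choose hex with hk0
    have hk0r : k0 < (gfS o).card := by rw [← hrows]; exact hspec.1
    have hsrc0 : gfsrc o k0 hk0r = s := by
      apply Fin.val_injective
      have := hlen k0 hk0r
      have h2 := hspec.2
      omega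
    have hpart : (toCSSPP o).part k0 = rowOf c (s : ℕ) (pthO o s) := by
      funext j
      show (if h : k0 < (gfS o).card then
        rowOf c (gfsrc o k0 h : ℕ) (pthO o (gfsrc o k0 h)) j else 0) = _
      rw [dif_pos hk0r, hsrc0]
    rw [hpart]
    have hpthf : pthO o s = f := by rw [pthO, hs]; rfl
    have hip : IsPath c s s (pthO o s) := pthO_isPath (by rw [hs]; exact Option.some_ne_none _)
    rw [rowPath_rowOf hip, hpthf, hs]


noncomputable def gfCsspp (c n : ℕ) : GF c n ≃ CSSPP c n :=
  ⟨toCSSPP, fromCSSPP, fromCSSPP_toCSSPP, toCSSPP_fromCSSPP⟩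

end Andrews

/-- Andrews: the number of column strict shifted plane partitions of class
`l-1` (`l ≥ 2`) with at most `n` parts in the first row equals
`det_{0≤i,j≤n-1} ( C(i+j+l-1, i) + δ_{i,j} )`. -/
theorem csspp_count_eq_det (n l : ℕ) (hl : 2 ≤ l) :
    (Nat.card (CSSPP (l - 1) n) : ℚ) =
      Matrix.det (Matrix.of fun i j : Fin n =>
        (((i : ℕ) + (j : ℕ) + l - 1).choose (i : ℕ) : ℚ) + if i = j then 1 else 0) := by
  classical
  have hl1 : l = (l - 1) + 1 := by omega
  rw [Andrews.det_expand (l - 1) n l hl1, Andrews.sum_sign_eq_card (l - 1) n]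
  congr 1
  rw [← Fintype.card_subtype (p := fun x : Andrews.Fam (l - 1) n => ¬ Andrews.Bad x)]
  rw [← Nat.card_eq_fintype_card]
  exact (Nat.card_congr ((Andrews.goodEquiv (l - 1) n).trans (Andrews.gfCsspp (l - 1) n))).symm
end

section
/- Column strict shifted plane partitions of class l-1 with at most n parts in the first row are in bijection with families of nonintersecting lattice paths (with unit horizontal steps (-1,0) and unit vertical steps (0,1)) whose starting points form a subset S of {(i,0) : 0 ≤ i ≤ n-1} and whose endpoints form the corresponding subset of {(0, i+l-1) : 0 ≤ i ≤ n-1}, i.e., (i,0) ∈ S if and only if (0, i+l-1) is an endpoint. -/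
/-- A lattice step: from `a` move one unit left `(-1,0)` or one unit up `(0,1)`. -/
def LatticeStep (a b : ℤ × ℤ) : Prop :=
  b = (a.1 - 1, a.2) ∨ b = (a.1, a.2 + 1)

/-- A family of nonintersecting lattice paths with unit steps `(-1,0)` and `(0,1)`:
for each `i` in a subset `S ⊆ {0,…,n-1}` there is a path (a nonempty list of lattice points)
from the starting point `(i, 0)` to the endpoint `(0, i+l-1)`, and distinct paths share no
lattice point. -/
structure NILP (n l : ℕ) where
  S : Finset (Fin n)
  path : Fin n → List (ℤ × ℤ)
  path_nil : ∀ i, i ∉ S → path i = []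
  steps : ∀ i ∈ S, List.Chain' LatticeStep (path i)
  head_eq : ∀ i ∈ S, (path i).head? = some ((i : ℤ), 0)
  last_eq : ∀ i ∈ S, (path i).getLast? = some (0, (i : ℤ) + l - 1)
  nonintersecting : ∀ i ∈ S, ∀ j ∈ S, i ≠ j → ∀ p, p ∈ path i → p ∉ path j

namespace ProofAux
open List

def shiftU (p : ℤ × ℤ) : ℤ × ℤ := (p.1, p.2 + 1)

def colL (x lo cnt : ℕ) : List (ℤ × ℤ) :=
  (List.range cnt).map fun t => ((x : ℤ), ((lo + t : ℕ) : ℤ))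

def pathB : ℕ → ℕ → (ℕ → ℕ) → List (ℤ × ℤ)
  | 0, b, a => colL 0 b (a 0 - b)
  | s+1, b, a => colL (s+1) b (a (s+1) - b) ++ pathB s (a (s+1) - 1) a

lemma colL_ne_nil {x lo cnt : ℕ} (h : 0 < cnt) : colL x lo cnt ≠ [] := by
  simp [colL, List.range_eq_nil, Nat.pos_iff_ne_zero.mp h]

lemma head?_colL {x lo cnt : ℕ} (h : 0 < cnt) :
    (colL x lo cnt).head? = some ((x : ℤ), (lo : ℤ)) := by
  obtain ⟨c, rfl⟩ := Nat.exists_eq_add_of_lt h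
  simp [colL, List.range_succ_eq_map]

lemma getLast?_colL {x lo cnt : ℕ} (h : 0 < cnt) :
    (colL x lo cnt).getLast? = some ((x : ℤ), ((lo + cnt - 1 : ℕ) : ℤ)) := by
  obtain ⟨c, rfl⟩ := Nat.exists_eq_add_of_lt h
  simp only [colL, List.range_succ, List.map_append, List.map_cons, List.map_nil]
  rw [List.getLast?_concat]
  have : lo + (0 + c) = lo + (0 + c + 1) - 1 := by omega
  rw [this]

lemma mem_colL {x lo cnt : ℕ} {p : ℤ × ℤ} :
    p ∈ colL x lo cnt ↔ p.1 = (x : ℤ) ∧ (lo : ℤ) ≤ p.2 ∧ p.2 < (lo : ℤ) + cnt := by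
  constructor
  · rintro h
    simp only [colL, List.mem_map, List.mem_range] at h
    obtain ⟨t, ht, rfl⟩ := h
    refine ⟨rfl, by push_cast; omega, by push_cast; omega⟩
  · rintro ⟨h1, h2, h3⟩
    simp only [colL, List.mem_map, List.mem_range]
    refine ⟨(p.2 - lo).toNat, by omega, ?_⟩
    have : ((lo + (p.2 - lo).toNat : ℕ) : ℤ) = p.2 := by push_cast; omega
    rw [this, ← h1]

lemma chain'_colL {x lo cnt : ℕ} : List.Chain' LatticeStep (colL x lo cnt) := by
  rw [colL, show @List.Chain' (ℤ × ℤ) = List.IsChain from rfl, List.isChain_map]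
  cases cnt with
  | zero => simp
  | succ c =>
    rw [List.isChain_range_succ]
    intro m _
    right
    simp [Prod.ext_iff]
    push_cast; ring

lemma head?_pathB {s b : ℕ} {a : ℕ → ℕ} (hb : b < a s) :
    (pathB s b a).head? = some ((s : ℤ), (b : ℤ)) := by
  cases s with
  | zero => rw [pathB, head?_colL (by omega)]
  | succ t =>
    rw [pathB, List.head?_append, head?_colL (by omega)]
    simp

lemma pathB_ne_nil {s b : ℕ} {a : ℕ → ℕ} (hb : b < a s) : pathB s b a ≠ [] := by
  intro h
  have := head?_pathB (a := a) hb
  rw [h] at this; simp at this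

lemma getLast?_pathB {s b : ℕ} {a : ℕ → ℕ}
    (mono : ∀ k, k + 1 ≤ s → a (k+1) ≤ a k) (pos : ∀ k, k ≤ s → 1 ≤ a k) (hb : b < a s) :
    (pathB s b a).getLast? = some ((0 : ℤ), ((a 0 - 1 : ℕ) : ℤ)) := by
  induction s generalizing b with
  | zero =>
    rw [pathB, getLast?_colL (by omega)]
    congr 2
    omega
  | succ t ih =>
    have hbt : (a (t+1) - 1 : ℕ) < a t := by
      have := mono t (by omega); have := pos (t+1) (by omega); omega
    rw [pathB, List.getLast?_append,
      ih (fun k hk => mono k (by omega)) (fun k hk => pos k (by omega)) hbt]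
    rfl

lemma chain'_pathB {s b : ℕ} {a : ℕ → ℕ}
    (mono : ∀ k, k + 1 ≤ s → a (k+1) ≤ a k) (pos : ∀ k, k ≤ s → 1 ≤ a k) (hb : b < a s) :
    List.Chain' LatticeStep (pathB s b a) := by
  induction s generalizing b with
  | zero => exact chain'_colL
  | succ t ih =>
    rw [pathB]
    apply List.IsChain.append chain'_colL
    · apply ih
      · intro k hk; exact mono k (by omega)
      · intro k hk; exact pos k (by omega)
      · have := mono t (by omega); have := pos (t+1) (by omega); omega
    · intro p hp q hq
      have h1 : p = (((t+1 : ℕ) : ℤ), ((b + (a (t+1) - b) - 1 : ℕ) : ℤ)) := by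
        rw [getLast?_colL (by omega)] at hp; simpa using hp.symm
      have hbt : (a (t+1) - 1 : ℕ) < a t := by
        have := mono t (by omega); have := pos (t+1) (by omega); omega
      have h2 : q = (((t : ℕ) : ℤ), ((a (t+1) - 1 : ℕ) : ℤ)) := by
        rw [head?_pathB hbt] at hq; simpa using hq.symm
      subst h1 h2
      left
      have e2 : ((a (t+1) - 1 : ℕ) : ℤ) = ((b + (a (t+1) - b) - 1 : ℕ) : ℤ) := by omega
      rw [Prod.mk.injEq]
      exact ⟨by push_cast; ring, e2⟩

lemma mem_pathB {s b : ℕ} {a : ℕ → ℕ}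
    (mono : ∀ k, k + 1 ≤ s → a (k+1) ≤ a k) (pos : ∀ k, k ≤ s → 1 ≤ a k) (hb : b < a s)
    {p : ℤ × ℤ} :
    p ∈ pathB s b a ↔ ∃ x : ℕ, x ≤ s ∧ p.1 = (x : ℤ) ∧
      ((if x = s then b else a (x+1) - 1 : ℕ) : ℤ) ≤ p.2 ∧ p.2 ≤ (a x : ℤ) - 1 := by
  induction s generalizing b with
  | zero =>
    rw [pathB, mem_colL]
    constructor
    · rintro ⟨h1, h2, h3⟩
      exact ⟨0, le_refl _, h1, by simpa using h2, by push_cast at h3 ⊢; omega⟩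
    · rintro ⟨x, hx, h1, h2, h3⟩
      interval_cases x
      refine ⟨h1, by simpa using h2, by push_cast at h3 ⊢; omega⟩
  | succ t ih =>
    have hbt : (a (t+1) - 1 : ℕ) < a t := by
      have := mono t (by omega); have := pos (t+1) (by omega); omega
    rw [pathB, List.mem_append, mem_colL,
      ih (fun k hk => mono k (by omega)) (fun k hk => pos k (by omega)) hbt]
    constructor
    · rintro (⟨h1, h2, h3⟩ | ⟨x, hx, h1, h2, h3⟩)
      · exact ⟨t+1, le_refl _, h1, by simpa using h2, by push_cast at h3 ⊢; omega⟩
      · refine ⟨x, by omega, h1, ?_, h3⟩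
        rcases Nat.eq_or_lt_of_le hx with h | h
        · subst h; simpa using h2
        · rwa [if_neg (by omega)] at h2 ⊢
    · rintro ⟨x, hx, h1, h2, h3⟩
      rcases Nat.eq_or_lt_of_le hx with h | h
      · subst h
        left
        refine ⟨h1, by simpa using h2, by push_cast at h3 ⊢; omega⟩
      · right
        refine ⟨x, by omega, h1, ?_, h3⟩
        rcases Nat.eq_or_lt_of_le (by omega : x ≤ t) with h' | h'
        · subst h'; rw [if_pos rfl]; rwa [if_neg (by omega)] at h2
        · rw [if_neg (by omega)]; rwa [if_neg (by omega)] at h2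

lemma colL_shift (x lo cnt : ℕ) : colL x (lo+1) cnt = (colL x lo cnt).map shiftU := by
  simp only [colL, List.map_map]
  apply List.map_congr_left
  intro t _
  simp [shiftU]
  push_cast
  ring

lemma colL_zero_succ (x c : ℕ) :
    colL x 0 (c+1) = ((x:ℤ), (0:ℤ)) :: (colL x 0 c).map shiftU := by
  rw [← colL_shift]
  show colL x 0 (c+1) = ((x:ℤ), (0:ℤ)) :: colL x (0+1) c
  simp only [colL, List.range_succ_eq_map, List.map_cons, List.map_map, List.cons.injEq]
  constructor
  · norm_num
  · apply List.map_congr_left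
    intro t ht
    show ((x:ℤ), ((0 + (t+1) : ℕ) : ℤ)) = ((x:ℤ), ((0 + 1 + t : ℕ) : ℤ))
    have h : 0 + (t+1) = 0 + 1 + t := by omega
    rw [h]

lemma pathB_congr : ∀ (s b : ℕ) (a a' : ℕ → ℕ), (∀ k ≤ s, a k = a' k) →
    pathB s b a = pathB s b a'
  | 0, b, a, a', h => by simp only [pathB, h 0 (by omega)]
  | (s+1), b, a, a', h => by
    simp only [pathB, h (s+1) (by omega)]
    rw [pathB_congr s _ a a' (fun k hk => h k (by omega))]

lemma pathB_shift : ∀ (s b : ℕ) (a : ℕ → ℕ), (∀ k ≤ s, 1 ≤ a k) →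
    pathB s (b+1) (fun k => a k + 1) = (pathB s b a).map shiftU
  | 0, b, a, pos => by
    simp only [pathB]
    have : a 0 + 1 - (b + 1) = a 0 - b := by omega
    rw [this, colL_shift]
  | (s+1), b, a, pos => by
    simp only [pathB, List.map_append]
    have h1 : a (s+1) + 1 - (b + 1) = a (s+1) - b := by omega
    have h2 : a (s+1) + 1 - 1 = (a (s+1) - 1) + 1 := by
      have := pos (s+1) (by omega); omega
    rw [h1, colL_shift, h2, pathB_shift s _ a (fun k hk => pos k (by omega))]

lemma pathB_succ_shift (s : ℕ) (a : ℕ → ℕ) (pos : ∀ k ≤ s, 1 ≤ a k) :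
    pathB s 0 (fun k => a k + 1) = ((s:ℤ), (0:ℤ)) :: (pathB s 0 a).map shiftU := by
  cases s with
  | zero =>
    simp only [pathB, Nat.sub_zero]
    rw [colL_zero_succ]
  | succ t =>
    simp only [pathB, Nat.sub_zero, List.map_append]
    have h2 : a (t+1) + 1 - 1 = (a (t+1) - 1) + 1 := by
      have := pos (t+1) (by omega); omega
    rw [colL_zero_succ, h2, pathB_shift t _ a (fun k hk => pos k (by omega))]
    simp

lemma pathB_left (s : ℕ) (a : ℕ → ℕ) (h : a (s+1) = 1) :
    pathB (s+1) 0 a = (((s+1:ℕ):ℤ), (0:ℤ)) :: pathB s 0 a := by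
  simp only [pathB, h]
  simp [colL, List.range_succ]

lemma latticeStep_shift_iff (u v : ℤ × ℤ) :
    LatticeStep (u.1, u.2 - 1) (v.1, v.2 - 1) ↔ LatticeStep u v := by
  simp only [LatticeStep, Prod.ext_iff]
  constructor <;> rintro (⟨h1, h2⟩ | ⟨h1, h2⟩)
  · left; exact ⟨h1, by omega⟩
  · right; exact ⟨h1, by omega⟩
  · left; exact ⟨h1, by omega⟩
  · right; exact ⟨h1, by omega⟩

lemma chain_bounds : ∀ (L : List (ℤ × ℤ)), List.Chain' LatticeStep L →
    ∀ p q, L.head? = some p → L.getLast? = some q → q.1 ≤ p.1 ∧ p.2 ≤ q.2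
  | [], _, p, q, hp, hq => by simp at hp
  | [r], _, p, q, hp, hq => by
    simp only [List.head?_cons, Option.some.injEq] at hp
    simp only [List.getLast?_singleton, Option.some.injEq] at hq
    subst hp; subst hq; exact ⟨le_refl _, le_refl _⟩
  | (r :: r' :: t), hc, p, q, hp, hq => by
    rw [show @List.Chain' (ℤ × ℤ) = List.IsChain from rfl, List.isChain_cons_cons] at hc
    simp only [List.head?_cons, Option.some.injEq] at hp
    subst hp
    have hq' : (r' :: t).getLast? = some q := by
      rw [← hq]; symm; exact List.getLast?_cons_cons ..
    have ih := chain_bounds (r' :: t) hc.2 r' q rfl hq'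
    rcases hc.1 with h | h <;> subst h <;>
      exact ⟨by omega, by omega⟩
    
lemma pathB_inj_aux {s : ℕ} {a a' : ℕ → ℕ}
    (mono : ∀ k, k + 1 ≤ s → a (k+1) ≤ a k) (pos : ∀ k ≤ s, 1 ≤ a k)
    (mono' : ∀ k, k + 1 ≤ s → a' (k+1) ≤ a' k) (pos' : ∀ k ≤ s, 1 ≤ a' k)
    (h : pathB s 0 a = pathB s 0 a') : ∀ k ≤ s, a k ≤ a' k := by
  intro k hk
  have hmem : ((k:ℤ), ((a k - 1 : ℕ) : ℤ)) ∈ pathB s 0 a := by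
    rw [mem_pathB mono pos (pos s (le_refl _))]
    refine ⟨k, hk, rfl, ?_, ?_⟩
    · by_cases hks : k = s
      · subst hks; rw [if_pos rfl]; simp
      · rw [if_neg hks]
        have h1 := mono k (by omega)
        have h2 := pos (k+1) (by omega)
        have h3 := pos k hk
        simp only
        omega
    · simp only
      have := pos k hk
      omega
  rw [h, mem_pathB mono' pos' (pos' s (le_refl _))] at hmem
  obtain ⟨x, hx, h1, h2, h3⟩ := hmem
  simp only at h1 h3
  have hxk : x = k := by exact_mod_cast h1.symm
  rw [hxk] at h3
  have := pos k hk
  omega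

lemma pathB_inj {s : ℕ} {a a' : ℕ → ℕ}
    (mono : ∀ k, k + 1 ≤ s → a (k+1) ≤ a k) (pos : ∀ k ≤ s, 1 ≤ a k)
    (mono' : ∀ k, k + 1 ≤ s → a' (k+1) ≤ a' k) (pos' : ∀ k ≤ s, 1 ≤ a' k)
    (h : pathB s 0 a = pathB s 0 a') : ∀ k ≤ s, a k = a' k :=
  fun k hk => le_antisymm (pathB_inj_aux mono pos mono' pos' h k hk)
    (pathB_inj_aux mono' pos' mono pos h.symm k hk)

lemma canon : ∀ (N : ℕ) (L : List (ℤ × ℤ)), L.length ≤ N → List.Chain' LatticeStep L →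
    ∀ (s e : ℕ), L.head? = some ((s:ℤ), 0) → L.getLast? = some (0, (e:ℤ)) →
    ∃ a : ℕ → ℕ, (∀ k, k + 1 ≤ s → a (k+1) ≤ a k) ∧ (∀ k ≤ s, 1 ≤ a k) ∧
      a 0 = e + 1 ∧ L = pathB s 0 a := by
  intro N
  induction N with
  | zero =>
    intro L hL _ s e hh _
    have hnil : L = [] := List.length_eq_zero_iff.mp (by omega)
    subst hnil; simp at hh
  | succ N ih =>
    intro L hL hc s e hh hl
    cases L with
    | nil => simp at hh
    | cons p L' =>
      simp only [List.head?_cons, Option.some.injEq] at hh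
      subst hh
      cases L' with
      | nil =>
        simp only [List.getLast?_singleton, Option.some.injEq, Prod.mk.injEq] at hl
        have hs : s = 0 := by exact_mod_cast hl.1
        have he : e = 0 := by exact_mod_cast hl.2.symm
        subst hs; subst he
        refine ⟨fun _ => 1, fun k hk => le_refl _, fun k hk => le_refl _, rfl, ?_⟩
        simp only [pathB, Nat.sub_zero, colL, List.range_succ, List.range_zero,
          List.nil_append, List.map_cons, List.map_nil]
        norm_num
      | cons q L'' =>
        rw [show @List.Chain' (ℤ × ℤ) = List.IsChain from rfl, List.isChain_cons_cons] at hc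
        have hl' : (q :: L'').getLast? = some (0, (e:ℤ)) := by
          rw [← hl]; symm; exact List.getLast?_cons_cons ..
        have hlen : (q :: L'').length ≤ N := by simp at hL ⊢; omega
        rcases hc.1 with hstep | hstep
        · -- left step
          rcases Nat.eq_zero_or_pos s with hs | hs
          · exfalso
            have hb := (chain_bounds (q :: L'') hc.2 q (0, (e:ℤ)) rfl hl').1
            rw [hstep] at hb
            simp only at hb
            omega
          · obtain ⟨s', rfl⟩ : ∃ s', s = s' + 1 := ⟨s - 1, by omega⟩
            have hq' : q = (((s':ℕ):ℤ), (0:ℤ)) := by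
              rw [hstep]
              congr 1
              push_cast; ring
            have hh' : (q :: L'').head? = some (((s':ℕ):ℤ), 0) := by
              rw [List.head?_cons, hq']
            obtain ⟨a', hm, hp, h0, heq⟩ := ih (q :: L'') hlen hc.2 s' e hh' hl'
            refine ⟨fun k => if k = s' + 1 then 1 else a' k, ?_, ?_, ?_, ?_⟩
            · intro k hk
              simp only
              by_cases h1 : k + 1 = s' + 1
              · rw [if_pos h1, if_neg (by omega)]; exact hp k (by omega)
              · rw [if_neg h1, if_neg (by omega)]; exact hm k (by omega)
            · intro k hk
              simp only
              by_cases h1 : k = s' + 1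
              · rw [if_pos h1]
              · rw [if_neg h1]; exact hp k (by omega)
            · simp only [if_neg (show (0:ℕ) ≠ s' + 1 by omega)]; exact h0
            · rw [pathB_left s' _ (by show (if s'+1 = s'+1 then 1 else a' (s'+1)) = 1; rw [if_pos rfl]),
                pathB_congr s' 0 _ a' (fun k hk => by show (if k = s'+1 then 1 else a' k) = a' k; rw [if_neg (by omega)]),
                ← heq, hq']
        · -- up step
          have he1 : 1 ≤ e := by
            have hb := (chain_bounds (q :: L'') hc.2 q (0, (e:ℤ)) rfl hl').2
            rw [hstep] at hb
            simp only at hb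
            omega
          have hcol : List.Chain' LatticeStep
              ((q :: L'').map (fun r : ℤ×ℤ => (r.1, r.2 - 1))) := by
            rw [show @List.Chain' (ℤ × ℤ) = List.IsChain from rfl, List.isChain_map]
            exact List.IsChain.imp (fun u v huv => (latticeStep_shift_iff u v).mpr huv) hc.2
          have hh2 : ((q :: L'').map (fun r : ℤ×ℤ => (r.1, r.2 - 1))).head?
              = some ((s:ℤ), 0) := by
            rw [List.map_cons, List.head?_cons, hstep]
            simp
          have hl2 : ((q :: L'').map (fun r : ℤ×ℤ => (r.1, r.2 - 1))).getLast?
              = some (0, ((e - 1 : ℕ) : ℤ)) := by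
            rw [List.getLast?_map, hl']
            simp only [Option.map_some]
            congr 1
            show ((0:ℤ), (e:ℤ) - 1) = ((0:ℤ), ((e-1:ℕ):ℤ))
            congr 1
            push_cast; omega
          obtain ⟨a'', hm, hp, h0, heq⟩ := ih _ (by simpa using hlen) hcol s (e-1) hh2 hl2
          refine ⟨fun k => a'' k + 1,
            fun k hk => by show a'' (k+1) + 1 ≤ a'' k + 1; have := hm k hk; omega,
            fun k hk => by show 1 ≤ a'' k + 1; omega,
            by show a'' 0 + 1 = e + 1; omega, ?_⟩
          rw [pathB_succ_shift s a'' hp, ← heq, List.map_map]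
          have hid : (shiftU ∘ fun r : ℤ×ℤ => (r.1, r.2 - 1)) = id := by
            funext r; simp [shiftU]
          rw [hid, List.map_id, hstep]


structure Mid (n l : ℕ) where
  S : Finset (Fin n)
  a : Fin n → ℕ → ℕ
  a_zero : ∀ i ∈ S, a i 0 = i + l
  a_pos : ∀ i ∈ S, ∀ k ≤ (i:ℕ), 1 ≤ a i k
  a_mono : ∀ i ∈ S, ∀ k, k + 1 ≤ (i:ℕ) → a i (k+1) ≤ a i k
  a_out : ∀ i k, (i ∉ S ∨ (i:ℕ) < k) → a i k = 0
  cross : ∀ i ∈ S, ∀ j ∈ S, (i:ℕ) < (j:ℕ) → ∀ k ≤ (i:ℕ), a i k < a j (k+1)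

lemma Mid.ext' {n l : ℕ} {A B : Mid n l} (h1 : A.S = B.S) (h2 : A.a = B.a) : A = B := by
  cases A; cases B
  cases h1; cases h2
  rfl

lemma NILP.ext' {n l : ℕ} {A B : NILP n l} (h1 : A.S = B.S) (h2 : A.path = B.path) : A = B := by
  cases A; cases B
  cases h1; cases h2
  rfl

section Equiv2

variable {n l : ℕ}

lemma midDisjoint (M : Mid n l) {i j : Fin n} (hi : i ∈ M.S) (hj : j ∈ M.S)
    (hij : (i:ℕ) < (j:ℕ)) :
    ∀ p, p ∈ pathB i 0 (M.a i) → p ∉ pathB j 0 (M.a j) := by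
  intro p hp hq
  rw [mem_pathB (M.a_mono i hi) (M.a_pos i hi) (M.a_pos i hi _ le_rfl)] at hp
  rw [mem_pathB (M.a_mono j hj) (M.a_pos j hj) (M.a_pos j hj _ le_rfl)] at hq
  obtain ⟨x, hx, hx1, _, hx3⟩ := hp
  obtain ⟨y, hy, hy1, hy2, _⟩ := hq
  have hxy : y = x := by rw [hx1] at hy1; exact_mod_cast hy1.symm
  subst hxy
  rw [if_neg (by omega)] at hy2
  have hc := M.cross i hi j hj hij y hx
  have hpos := M.a_pos j hj (y+1) (by omega)
  omega

noncomputable def toNILP (hl : 2 ≤ l) (M : Mid n l) : NILP n l where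
  S := M.S
  path := fun i => if i ∈ M.S then pathB i 0 (M.a i) else []
  path_nil := fun i hi => if_neg hi
  steps := fun i hi => by
    simp only [hi, if_true]
    exact chain'_pathB (M.a_mono i hi) (M.a_pos i hi) (M.a_pos i hi _ le_rfl)
  head_eq := fun i hi => by
    simp only [hi, if_true]
    rw [head?_pathB (M.a_pos i hi _ le_rfl)]
    norm_num
  last_eq := fun i hi => by
    simp only [hi, if_true]
    rw [getLast?_pathB (M.a_mono i hi) (M.a_pos i hi) (M.a_pos i hi _ le_rfl)]
    congr 1
    have h0 := M.a_zero i hi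
    simp only [Prod.mk.injEq]
    refine ⟨trivial, ?_⟩
    rw [h0]
    push_cast
    omega
  nonintersecting := by
    intro i hi j hj hne p hp hq
    simp only [hi, if_true] at hp
    simp only [hj, if_true] at hq
    rcases lt_trichotomy (i:ℕ) (j:ℕ) with h | h | h
    · exact midDisjoint M hi hj h p hp hq
    · exact hne (Fin.ext h)
    · exact midDisjoint M hj hi h p hq hp

lemma canonN (hl : 2 ≤ l) (N : NILP n l) (i : Fin n) (h : i ∈ N.S) :
    ∃ a : ℕ → ℕ, (∀ k, k + 1 ≤ (i:ℕ) → a (k+1) ≤ a k) ∧ (∀ k ≤ (i:ℕ), 1 ≤ a k) ∧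
      a 0 = (i:ℕ) + l ∧ N.path i = pathB i 0 a := by
  have hlast : (N.path i).getLast? = some (0, (((i:ℕ) + l - 1 : ℕ) : ℤ)) := by
    rw [N.last_eq i h]
    congr 1
    simp only [Prod.mk.injEq]
    refine ⟨trivial, ?_⟩
    push_cast
    omega
  obtain ⟨a, hm, hp, h0, heq⟩ := canon (N.path i).length (N.path i) le_rfl
    (N.steps i h) i ((i:ℕ) + l - 1) (N.head_eq i h) hlast
  exact ⟨a, hm, hp, by omega, heq⟩

noncomputable def toMid (hl : 2 ≤ l) (N : NILP n l) : Mid n l where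
  S := N.S
  a := fun i k =>
    if h : i ∈ N.S ∧ k ≤ (i:ℕ) then Classical.choose (canonN hl N i h.1) k else 0
  a_zero := fun i hi => by
    beta_reduce
    rw [dif_pos ⟨hi, by omega⟩]
    exact (Classical.choose_spec (canonN hl N i hi)).2.2.1
  a_pos := fun i hi k hk => by
    beta_reduce
    rw [dif_pos ⟨hi, hk⟩]
    exact (Classical.choose_spec (canonN hl N i hi)).2.1 k hk
  a_mono := fun i hi k hk => by
    beta_reduce
    rw [dif_pos ⟨hi, hk⟩, dif_pos ⟨hi, by omega⟩]
    exact (Classical.choose_spec (canonN hl N i hi)).1 k hk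
  a_out := fun i k hk => by
    beta_reduce
    have hng : ¬(i ∈ N.S ∧ k ≤ (i:ℕ)) := by
      rintro ⟨h1, h2⟩
      rcases hk with h | h
      · exact h h1
      · omega
    rw [dif_neg hng]
  cross := by
    intro i hi j hj hij k hk
    beta_reduce
    rw [dif_pos ⟨hi, hk⟩, dif_pos ⟨hj, by omega⟩]
    obtain ⟨mi, pi, zi, ei⟩ := Classical.choose_spec (canonN hl N i hi)
    obtain ⟨mj, pj, zj, ej⟩ := Classical.choose_spec (canonN hl N j hj)
    set A := Classical.choose (canonN hl N i hi) with hA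
    set B := Classical.choose (canonN hl N j hj) with hB
    have dich : ∀ m, m ≤ (i:ℕ) → A m < B (m+1) ∨ B m < A m := by
      intro m hm
      have hmem : (((m:ℕ):ℤ), ((A m - 1 : ℕ) : ℤ)) ∈ N.path i := by
        rw [ei, mem_pathB mi pi (pi _ le_rfl)]
        refine ⟨m, hm, rfl, ?_, ?_⟩
        · by_cases hms : m = (i:ℕ)
          · rw [if_pos hms]
            have := pi m hm
            simp only
            omega
          · rw [if_neg hms]
            have h1 := mi m (by omega)
            have h2 := pi (m+1) (by omega)
            simp only
            omega
        · have := pi m hm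
          simp only
          omega
      have hnot := N.nonintersecting i hi j hj (by intro hij'; rw [hij'] at hij; omega)
        _ hmem
      rw [ej, mem_pathB mj pj (pj _ le_rfl)] at hnot
      by_contra hcon
      push_neg at hcon
      obtain ⟨hc1, hc2⟩ := hcon
      apply hnot
      refine ⟨m, by omega, rfl, ?_, ?_⟩
      · rw [if_neg (by omega)]
        have := pi m hm
        have := pj (m+1) (by omega)
        simp only
        omega
      · have := pi m hm
        simp only
        omega
    have main : ∀ m, m ≤ (i:ℕ) → A m < B (m+1) := by
      intro m
      induction m with
      | zero =>
        intro h0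
        rcases dich 0 h0 with h | h
        · exact h
        · exfalso
          rw [zi, zj] at h
          omega
      | succ m ihm =>
        intro hm
        rcases dich (m+1) hm with h | h
        · exact h
        · exfalso
          have h1 := ihm (by omega)
          have h2 := mi m (by omega)
          omega
    exact main k hk

noncomputable def equiv2 (hl : 2 ≤ l) : Mid n l ≃ NILP n l where
  toFun := toNILP hl
  invFun := toMid hl
  left_inv := by
    intro M
    refine Mid.ext' rfl ?_
    funext i k
    show (if h : i ∈ M.S ∧ k ≤ (i:ℕ) then
      Classical.choose (canonN hl (toNILP hl M) i h.1) k else 0) = M.a i k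
    by_cases h : i ∈ M.S ∧ k ≤ (i:ℕ)
    · rw [dif_pos h]
      obtain ⟨hi, hk⟩ := h
      obtain ⟨mc, pc, zc, ec⟩ := Classical.choose_spec (canonN hl (toNILP hl M) i hi)
      have hpath : (toNILP hl M).path i = pathB i 0 (M.a i) := by
        show (if i ∈ M.S then pathB (i:ℕ) 0 (M.a i) else []) = _
        rw [if_pos hi]
      exact pathB_inj mc pc (M.a_mono i hi) (M.a_pos i hi) (ec.symm.trans hpath) k hk
    · rw [dif_neg h]
      symm
      apply M.a_out
      by_cases h1 : i ∈ M.S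
      · right
        by_contra hc
        exact h ⟨h1, by omega⟩
      · left
        exact h1
  right_inv := by
    intro N
    refine NILP.ext' rfl ?_
    funext i
    show (if i ∈ N.S then pathB (i:ℕ) 0 ((toMid hl N).a i) else []) = N.path i
    by_cases hi : i ∈ N.S
    · rw [if_pos hi]
      obtain ⟨mc, pc, zc, ec⟩ := Classical.choose_spec (canonN hl N i hi)
      have hcong : pathB (i:ℕ) 0 ((toMid hl N).a i)
          = pathB (i:ℕ) 0 (Classical.choose (canonN hl N i hi)) := by
        apply pathB_congr
        intro k hk
        show (if h : i ∈ N.S ∧ k ≤ (i:ℕ) then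
          Classical.choose (canonN hl N i h.1) k else 0) = _
        rw [dif_pos ⟨hi, hk⟩]
      rw [hcong, ← ec]
    · rw [if_neg hi, N.path_nil i hi]

end Equiv2

section Equiv1

variable {n l : ℕ}

lemma CSSPP.ext' {c n : ℕ} {A B : CSSPP c n} (h1 : A.rows = B.rows)
    (h2 : A.len = B.len) (h3 : A.part = B.part) : A = B := by
  cases A; cases B
  cases h1; cases h2; cases h3
  rfl

variable {c : ℕ}

lemma len_anti (P : CSSPP c n) : ∀ d r, r + d < P.rows → P.len (r + d) + d ≤ P.len r := by
  intro d
  induction d with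
  | zero =>
    intro r _
    rw [show r + 0 = r from rfl]
    omega
  | succ d ih =>
    intro r h
    rw [show r + (d + 1) = r + d + 1 from rfl]
    have h1 := P.len_strict (r + d) (by rw [show r + d + 1 = r + (d+1) from rfl]; omega)
    have h2 := ih r (by omega)
    omega

lemma len_lt (P : CSSPP c n) {r r' : ℕ} (h : r < r') (h' : r' < P.rows) :
    P.len r' < P.len r := by
  have h1 := len_anti P (r' - r) r (by omega)
  have h2 : r + (r' - r) = r' := by omega
  rw [h2] at h1
  omega

lemma len_bound (P : CSSPP c n) {r : ℕ} (h : r < P.rows) : P.len r - 1 < n := by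
  have h0 := P.first_row_le (by omega)
  have hp := P.len_pos 0 (by omega)
  rcases Nat.eq_zero_or_pos r with hr | hr
  · subst hr; omega
  · have := len_lt P hr h
    omega

lemma part_lt (P : CSSPP c n) {r r' k : ℕ} (h : r < r') (h' : r' < P.rows)
    (hk : k < P.len r') : P.part r' k < P.part r (k + 1) := by
  have main : ∀ d r, r + d + 1 < P.rows →
      ∀ k, k < P.len (r + d + 1) → P.part (r + d + 1) k < P.part r (k + 1) := by
    intro d
    induction d with
    | zero => intro r h k hk; exact P.col_strict_dec r k h hk
    | succ d ih =>
      intro r h k hk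
      have e : (r + 1) + d + 1 = r + (d + 1) + 1 := by omega
      have h1 := ih (r + 1) (by omega) k (by rw [e]; exact hk)
      rw [e] at h1
      have hlen1 : P.len (r + (d+1) + 1) < P.len (r + 1) := len_lt P (by omega) (by omega)
      have h2 : P.part (r+1) (k+1) ≤ P.part (r+1) k :=
        P.row_weak_dec (r+1) k (by omega) (by omega)
      have h3 : P.part (r+1) k < P.part r (k+1) :=
        P.col_strict_dec r k (by omega) (by omega)
      omega
  have e2 : r + (r' - r - 1) + 1 = r' := by omega
  have := main (r' - r - 1) r (by omega) k (by rw [e2]; exact hk)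
  rwa [e2] at this

open Classical in
noncomputable def fA (P : CSSPP c n) (i : Fin n) (k : ℕ) : ℕ :=
  if h : ∃ r, r < P.rows ∧ P.len r = (i:ℕ) + 1 then P.part (Nat.find h) k else 0

open Classical in
lemma fA_pos_eq (P : CSSPP c n) (i : Fin n) (k : ℕ)
    (h : ∃ r, r < P.rows ∧ P.len r = (i:ℕ) + 1) : fA P i k = P.part (Nat.find h) k :=
  dif_pos h

open Classical in
noncomputable def toMid1 (hl : 2 ≤ l) (P : CSSPP (l-1) n) : Mid n l where
  S := Finset.univ.filter (fun i : Fin n => ∃ r, r < P.rows ∧ P.len r = (i:ℕ) + 1)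
  a := fA P
  a_zero := by
    intro i hi
    have h := (Finset.mem_filter.mp hi).2
    rw [fA_pos_eq P i 0 h]
    obtain ⟨h1, h2⟩ := Nat.find_spec h
    rw [P.class_eq _ h1, h2]
    omega
  a_pos := by
    intro i hi k hk
    have h := (Finset.mem_filter.mp hi).2
    rw [fA_pos_eq P i k h]
    obtain ⟨h1, h2⟩ := Nat.find_spec h
    exact P.part_pos _ k h1 (by omega)
  a_mono := by
    intro i hi k hk
    have h := (Finset.mem_filter.mp hi).2
    rw [fA_pos_eq P i k h, fA_pos_eq P i (k+1) h]
    obtain ⟨h1, h2⟩ := Nat.find_spec h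
    exact P.row_weak_dec _ k h1 (by omega)
  a_out := by
    intro i k hk
    by_cases h : ∃ r, r < P.rows ∧ P.len r = (i:ℕ) + 1
    · rw [fA_pos_eq P i k h]
      obtain ⟨h1, h2⟩ := Nat.find_spec h
      rcases hk with hk | hk
      · exact absurd (Finset.mem_filter.mpr ⟨Finset.mem_univ i, h⟩) hk
      · exact P.part_eq_zero _ k (by omega)
    · exact dif_neg h
  cross := by
    intro i hi j hj hij k hk
    have h1 := (Finset.mem_filter.mp hi).2
    have h2 := (Finset.mem_filter.mp hj).2
    rw [fA_pos_eq P i k h1, fA_pos_eq P j (k+1) h2]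
    obtain ⟨hr1, hl1⟩ := Nat.find_spec h1
    obtain ⟨hr2, hl2⟩ := Nat.find_spec h2
    have hord : Nat.find h2 < Nat.find h1 := by
      rcases lt_trichotomy (Nat.find h2) (Nat.find h1) with hc | hc | hc
      · exact hc
      · exfalso; rw [hc] at hl2; omega
      · exfalso; have := len_lt P hc hr2; omega
    exact part_lt P hord hr1 (by omega)

noncomputable def bE (M : Mid n l) (r : ℕ) (h : r < M.S.card) : Fin n :=
  M.S.orderEmbOfFin rfl ⟨M.S.card - 1 - r, by omega⟩

lemma bE_mem (M : Mid n l) (r : ℕ) (h : r < M.S.card) : bE M r h ∈ M.S :=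
  Finset.orderEmbOfFin_mem _ _ _

lemma bE_lt (M : Mid n l) {r r' : ℕ} (h : r < M.S.card) (h' : r' < M.S.card)
    (hrr : r < r') : ((bE M r' h' : Fin n) : ℕ) < ((bE M r h : Fin n) : ℕ) := by
  have : (⟨M.S.card - 1 - r', by omega⟩ : Fin M.S.card) < ⟨M.S.card - 1 - r, by omega⟩ := by
    simp only [Fin.mk_lt_mk]
    omega
  exact (M.S.orderEmbOfFin rfl).strictMono this

noncomputable def bLen (M : Mid n l) (r : ℕ) : ℕ :=
  if h : r < M.S.card then ((bE M r h : Fin n) : ℕ) + 1 else 0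

noncomputable def bPart (M : Mid n l) (r k : ℕ) : ℕ :=
  if h : r < M.S.card then M.a (bE M r h) k else 0

lemma bLen_eq (M : Mid n l) {r : ℕ} (h : r < M.S.card) :
    bLen M r = ((bE M r h : Fin n) : ℕ) + 1 := dif_pos h

lemma bPart_eq (M : Mid n l) {r : ℕ} (k : ℕ) (h : r < M.S.card) :
    bPart M r k = M.a (bE M r h) k := dif_pos h

noncomputable def toCSSPP (hl : 2 ≤ l) (M : Mid n l) : CSSPP (l-1) n where
  rows := M.S.card
  len := bLen M
  part := bPart M
  len_strict := by
    intro i h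
    rw [bLen_eq M (show i + 1 < M.S.card from h), bLen_eq M (show i < M.S.card by omega)]
    have := bE_lt M (show i < M.S.card by omega) h (by omega)
    omega
  len_pos := by
    intro i h
    rw [bLen_eq M h]
    omega
  first_row_le := by
    intro h
    rw [bLen_eq M h]
    have := (bE M 0 h).isLt
    omega
  part_pos := by
    intro i j hi hj
    rw [bLen_eq M hi] at hj
    rw [bPart_eq M j hi]
    exact M.a_pos _ (bE_mem M i hi) j (by omega)
  row_weak_dec := by
    intro i j hi hj
    rw [bLen_eq M hi] at hj
    rw [bPart_eq M j hi, bPart_eq M (j+1) hi]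
    exact M.a_mono _ (bE_mem M i hi) j (by omega)
  col_strict_dec := by
    intro i j hi hj
    rw [bLen_eq M hi] at hj
    rw [bPart_eq M j hi, bPart_eq M (j+1) (show i < M.S.card by omega)]
    exact M.cross _ (bE_mem M (i+1) hi) _ (bE_mem M i (by omega))
      (bE_lt M (by omega) hi (by omega)) j (by omega)
  class_eq := by
    intro i hi
    rw [bLen_eq M hi, bPart_eq M 0 hi, M.a_zero _ (bE_mem M i hi)]
    omega
  len_eq_zero := by
    intro i hi
    exact dif_neg (by omega)
  part_eq_zero := by
    intro i j hij
    by_cases hi : i < M.S.card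
    · rw [bPart_eq M j hi]
      apply M.a_out
      right
      have hj : ¬ j < bLen M i := fun hc => hij ⟨hi, hc⟩
      rw [bLen_eq M hi] at hj
      omega
    · exact dif_neg hi

open Classical in
lemma card_S_eq (hl : 2 ≤ l) (P : CSSPP (l-1) n) : (toMid1 hl P).S.card = P.rows := by
  apply Finset.card_eq_of_bijective (fun r h => (⟨P.len r - 1, len_bound P h⟩ : Fin n))
  · intro i hi
    obtain ⟨r, hr, hlr⟩ := (Finset.mem_filter.mp hi).2
    exact ⟨r, hr, by apply Fin.ext; simp; omega⟩
  · intro r h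
    refine Finset.mem_filter.mpr ⟨Finset.mem_univ _, r, h, ?_⟩
    have := P.len_pos r h
    simp
    omega
  · intro r r' hr hr' heq
    have h1 : P.len r - 1 = P.len r' - 1 := congrArg Fin.val heq
    have p1 := P.len_pos r hr
    have p2 := P.len_pos r' hr'
    rcases lt_trichotomy r r' with hc | hc | hc
    · have := len_lt P hc hr'; omega
    · exact hc
    · have := len_lt P hc hr; omega

lemma bE_val {n l : ℕ} (M : Mid n l) (g : Fin M.S.card → Fin n)
    (hfs : ∀ t, g t ∈ M.S) (hmono : StrictMono g) (r : ℕ) (h : r < M.S.card) :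
    bE M r h = g ⟨M.S.card - 1 - r, by omega⟩ := by
  have huniq := Finset.orderEmbOfFin_unique (s := M.S) (k := M.S.card) rfl hfs hmono
  rw [bE, ← huniq]

set_option maxHeartbeats 1000000 in
open Classical in
lemma bE_toMid1 (hl : 2 ≤ l) (P : CSSPP (l-1) n) {r : ℕ} (h : r < (toMid1 hl P).S.card) :
    ((bE (toMid1 hl P) r h : Fin n) : ℕ) = P.len r - 1 := by
  have hcard := card_S_eq hl P
  set M := toMid1 hl P with hM
  have hf : ∀ t : Fin M.S.card,
      (⟨P.len (P.rows - 1 - (t:ℕ)) - 1, len_bound P (by have := t.isLt; omega)⟩ : Fin n)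
        ∈ M.S := by
    intro t
    have ht := t.isLt
    refine Finset.mem_filter.mpr ⟨Finset.mem_univ _, P.rows - 1 - (t:ℕ), by omega, ?_⟩
    have := P.len_pos (P.rows - 1 - (t:ℕ)) (by omega)
    simp
    omega
  have hmono : StrictMono (fun t : Fin M.S.card =>
      (⟨P.len (P.rows - 1 - (t:ℕ)) - 1, len_bound P (by have := t.isLt; omega)⟩ : Fin n)) := by
    intro t t' htt
    have htv := Fin.lt_def.mp htt
    have ht' := t'.isLt
    have h1 : P.rows - 1 - (t':ℕ) < P.rows - 1 - (t:ℕ) := by omega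
    have h2 := len_lt P h1 (by omega)
    have p1 := P.len_pos (P.rows - 1 - (t:ℕ)) (by omega)
    simp only [Fin.lt_def]
    omega
  have hc := bE_val M _ hf hmono r h
  have hval := congrArg Fin.val hc
  have hval2 : ((bE M r h : Fin n) : ℕ)
      = P.len (P.rows - 1 - (M.S.card - 1 - r)) - 1 := hval
  rw [show P.rows - 1 - (M.S.card - 1 - r) = r from by omega] at hval2
  exact hval2

open Classical in
lemma left1 (hl : 2 ≤ l) (P : CSSPP (l-1) n) : toCSSPP hl (toMid1 hl P) = P := by
  have hcard := card_S_eq hl P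
  refine CSSPP.ext' hcard ?_ ?_
  · funext r
    show bLen (toMid1 hl P) r = P.len r
    by_cases h : r < (toMid1 hl P).S.card
    · rw [bLen_eq _ h, bE_toMid1 hl P h]
      have := P.len_pos r (by omega)
      omega
    · have h0 : bLen (toMid1 hl P) r = 0 := dif_neg h
      rw [h0, P.len_eq_zero r (by omega)]
  · funext r k
    show bPart (toMid1 hl P) r k = P.part r k
    by_cases h : r < (toMid1 hl P).S.card
    · rw [bPart_eq _ k h]
      have hval := bE_toMid1 hl P h
      have hp := P.len_pos r (by omega)
      have hex : ∃ r', r' < P.rows ∧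
          P.len r' = ((bE (toMid1 hl P) r h : Fin n) : ℕ) + 1 := ⟨r, by omega, by omega⟩
      show fA P _ k = P.part r k
      rw [fA_pos_eq P _ k hex]
      obtain ⟨hr1, hr2⟩ := Nat.find_spec hex
      have hfind : Nat.find hex = r := by
        rcases lt_trichotomy (Nat.find hex) r with hc | hc | hc
        · exfalso; have := len_lt P hc (by omega); omega
        · exact hc
        · exfalso; have := len_lt P hc hr1; omega
      rw [hfind]
    · have h0 : bPart (toMid1 hl P) r k = 0 := dif_neg h
      rw [h0, P.part_eq_zero r k (fun hc => h (by omega))]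

open Classical in
lemma right1 (hl : 2 ≤ l) (M : Mid n l) : toMid1 hl (toCSSPP hl M) = M := by
  have hmem : ∀ i : Fin n,
      (∃ r, r < (toCSSPP hl M).rows ∧ (toCSSPP hl M).len r = (i:ℕ)+1) ↔ i ∈ M.S := by
    intro i
    constructor
    · rintro ⟨r, hr, hlen⟩
      have hb : bLen M r = (i:ℕ)+1 := hlen
      rw [bLen_eq M hr] at hb
      have hbe : bE M r hr = i := Fin.ext (by omega)
      rw [← hbe]
      exact bE_mem M r hr
    · intro hi
      have hrange : i ∈ Set.range (M.S.orderEmbOfFin rfl) := by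
        rw [Finset.range_orderEmbOfFin]
        exact hi
      obtain ⟨t, ht⟩ := hrange
      have htl := t.isLt
      refine ⟨M.S.card - 1 - (t:ℕ),
        by have he : (toCSSPP hl M).rows = M.S.card := rfl; omega, ?_⟩
      show bLen M _ = _
      have hr : M.S.card - 1 - (t:ℕ) < M.S.card := by omega
      rw [bLen_eq M hr]
      have hbe : bE M (M.S.card - 1 - (t:ℕ)) hr = i := by
        rw [bE, ← ht]
        congr 1
        apply Fin.ext
        simp only
        omega
      rw [hbe]
  refine Mid.ext' ?_ ?_
  · apply Finset.ext
    intro i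
    show i ∈ Finset.univ.filter _ ↔ i ∈ M.S
    rw [Finset.mem_filter]
    constructor
    · rintro ⟨_, h⟩
      exact (hmem i).mp h
    · intro hi
      exact ⟨Finset.mem_univ _, (hmem i).mpr hi⟩
  · funext i k
    show fA (toCSSPP hl M) i k = M.a i k
    by_cases h : ∃ r, r < (toCSSPP hl M).rows ∧ (toCSSPP hl M).len r = (i:ℕ)+1
    · rw [fA_pos_eq _ i k h]
      obtain ⟨hr, hlen⟩ := Nat.find_spec h
      show bPart M _ k = M.a i k
      rw [bPart_eq M k hr]
      have hE : bE M (Nat.find h) hr = i := by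
        have hb : bLen M (Nat.find h) = (i:ℕ)+1 := hlen
        rw [bLen_eq M hr] at hb
        exact Fin.ext (by omega)
      rw [hE]
    · have h0 : fA (toCSSPP hl M) i k = 0 := dif_neg h
      rw [h0]
      symm
      apply M.a_out
      left
      intro hi
      exact h ((hmem i).mpr hi)

noncomputable def equiv1 (hl : 2 ≤ l) : CSSPP (l-1) n ≃ Mid n l where
  toFun := toMid1 hl
  invFun := toCSSPP hl
  left_inv := left1 hl
  right_inv := right1 hl

end Equiv1

end ProofAux

/-- column strict shifted plane partitions of class `l-1` with at most `n`
parts in the first row are in bijection with families of nonintersecting lattice paths with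
starting points a subset of `{(i,0) : 0 ≤ i ≤ n-1}` and endpoints the corresponding subset
of `{(0, i+l-1) : 0 ≤ i ≤ n-1}`. -/


theorem csspp_equiv_nonintersecting_lattice_paths (n l : ℕ) (hl : 2 ≤ l) :
    Nonempty (CSSPP (l - 1) n ≃ NILP n l) := by
  exact ⟨(ProofAux.equiv1 hl).trans (ProofAux.equiv2 hl)⟩
end
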